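/- arXiv:1409.1472 — 3 statements merged into one kernel-verified Lean document; each statement's English description precedes it below -/
import Mathlib

section
/- Let ζ be an irrational real number with λ_1(ζ) < ∞, and set k_0 = ⌈(λ_1(ζ)+1)/2⌉. Then λ_k(ζ) = (λ_1(ζ) − k + 1)/k for all integers k with 1 ≤ k ≤ k_0 − 1, and max{(λ_1(ζ) − k + 1)/k, 1/k} ≤ λ_k(ζ) ≤ 1 for all integers k ≥ k_0. -/
/-- Distance from a real number to the nearest integer. -/
noncomputable def distNearestInt (a : ℝ) : ℝ := |a - round a|

/-- `max_{1 ≤ j ≤ k} ‖ζ^j x‖` for a positive integer `x`. -/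
noncomputable def maxDist (k : ℕ) (ζ : ℝ) (x : ℕ) : ℝ :=
  ⨆ j ∈ Finset.Icc 1 k, distNearestInt (ζ ^ j * x)

/-- The approximation constant `λ_k(ζ)`, as an extended real number in `[0,∞]`. -/
noncomputable def lambdaConst (k : ℕ) (ζ : ℝ) : EReal :=
  sSup (insert (0 : EReal) {e : EReal | ∃ η : ℝ, e = (η : EReal) ∧
    {x : ℕ | 0 < x ∧ 0 < maxDist k ζ x ∧ maxDist k ζ x ≤ (x : ℝ) ^ (-η)}.Infinite})

/-- The uniform approximation constant `λ̂_k(ζ)`, as an extended real number in `[0,∞]`. -/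
noncomputable def lambdaHatConst (k : ℕ) (ζ : ℝ) : EReal :=
  sSup (insert (0 : EReal) {e : EReal | ∃ η : ℝ, e = (η : EReal) ∧
    ∃ X₀ : ℝ, ∀ X : ℝ, X₀ ≤ X → ∃ x : ℕ, 1 ≤ x ∧ (x : ℝ) ≤ X ∧
      0 < maxDist k ζ x ∧ maxDist k ζ x ≤ X ^ (-η)})

/-- The dual approximation constant `w_k(ζ)`, as an extended real number in `[0,∞]`. -/
noncomputable def wConst (k : ℕ) (ζ : ℝ) : EReal :=
  sSup (insert (0 : EReal) {e : EReal | ∃ ν : ℝ, e = (ν : EReal) ∧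
    ∀ X₀ : ℝ, ∃ X : ℝ, X₀ ≤ X ∧ ∃ p : Fin (k + 1) → ℤ,
      (∀ j, |(p j : ℝ)| ≤ X) ∧
      0 < |∑ j : Fin (k + 1), ζ ^ (j : ℕ) * (p j : ℝ)| ∧
      |∑ j : Fin (k + 1), ζ ^ (j : ℕ) * (p j : ℝ)| ≤ X ^ (-ν)})

/-- The uniform dual approximation constant `ŵ_k(ζ)`, as an extended real number in `[0,∞]`. -/
noncomputable def wHatConst (k : ℕ) (ζ : ℝ) : EReal :=
  sSup (insert (0 : EReal) {e : EReal | ∃ ν : ℝ, e = (ν : EReal) ∧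
    ∃ X₀ : ℝ, ∀ X : ℝ, X₀ ≤ X → ∃ p : Fin (k + 1) → ℤ,
      (∀ j, |(p j : ℝ)| ≤ X) ∧
      0 < |∑ j : Fin (k + 1), ζ ^ (j : ℕ) * (p j : ℝ)| ∧
      |∑ j : Fin (k + 1), ζ ^ (j : ℕ) * (p j : ℝ)| ≤ X ^ (-ν)})

open Finset Set

lemma dni_nonneg (a : ℝ) : 0 ≤ distNearestInt a := abs_nonneg _

lemma dni_le_half (a : ℝ) : distNearestInt a ≤ 1/2 := abs_sub_round a

lemma dni_le (a : ℝ) (m : ℤ) : distNearestInt a ≤ |a - m| := round_le a m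

lemma dni_pos {a : ℝ} (ha : Irrational a) : 0 < distNearestInt a := by
  rw [distNearestInt, abs_pos, sub_ne_zero]
  exact ha.ne_int _

lemma maxDist_bdd (k : ℕ) (ζ : ℝ) (x : ℕ) :
    BddAbove (Set.range fun j => ⨆ _ : j ∈ Finset.Icc 1 k, distNearestInt (ζ ^ j * x)) := by
  refine ⟨1/2, ?_⟩
  rintro v ⟨j, rfl⟩
  by_cases h : j ∈ Finset.Icc 1 k
  · simp only [ciSup_pos h]; exact dni_le_half _
  · simp only [h]
    rw [Real.iSup_of_isEmpty]
    norm_num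

lemma le_maxDist {k j : ℕ} (hj : 1 ≤ j) (hjk : j ≤ k) (ζ : ℝ) (x : ℕ) :
    distNearestInt (ζ ^ j * x) ≤ maxDist k ζ x := by
  have h : j ∈ Finset.Icc 1 k := Finset.mem_Icc.2 ⟨hj, hjk⟩
  have heq : (⨆ _ : j ∈ Finset.Icc 1 k, distNearestInt (ζ ^ j * x))
      = distNearestInt (ζ ^ j * x) := ciSup_pos h
  rw [maxDist, ← heq]
  exact le_ciSup (maxDist_bdd k ζ x) j

lemma maxDist_le {k : ℕ} {ζ : ℝ} {x : ℕ} {c : ℝ} (hc : 0 ≤ c)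
    (h : ∀ j, 1 ≤ j → j ≤ k → distNearestInt (ζ ^ j * x) ≤ c) : maxDist k ζ x ≤ c := by
  refine Real.iSup_le (fun j => ?_) hc
  refine Real.iSup_le (fun hj => ?_) hc
  exact h j (Finset.mem_Icc.1 hj).1 (Finset.mem_Icc.1 hj).2

lemma maxDist_pos {k : ℕ} (hk : 1 ≤ k) {ζ : ℝ} (hirr : Irrational ζ) {x : ℕ} (hx : 0 < x) :
    0 < maxDist k ζ x := by
  refine lt_of_lt_of_le ?_ (le_maxDist le_rfl hk ζ x)
  rw [pow_one]
  exact dni_pos (hirr.mul_natCast (by omega))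

lemma maxDist_one {ζ : ℝ} (x : ℕ) : maxDist 1 ζ x = distNearestInt (ζ * x) := by
  refine le_antisymm (maxDist_le (dni_nonneg _) fun j h1 h2 => ?_) ?_
  · interval_cases j
    rw [pow_one]
  · have := le_maxDist le_rfl le_rfl ζ (k := 1) x
    rwa [pow_one] at this
lemma lambda_nonneg (k : ℕ) (ζ : ℝ) : 0 ≤ lambdaConst k ζ :=
  le_sSup (Set.mem_insert _ _)

lemma lambda_ne_bot (k : ℕ) (ζ : ℝ) : lambdaConst k ζ ≠ ⊥ := by
  intro h
  have := lambda_nonneg k ζ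
  rw [h] at this
  simp at this

lemma lambda_ge {k : ℕ} {ζ : ℝ} {η : ℝ}
    (h : {x : ℕ | 0 < x ∧ 0 < maxDist k ζ x ∧ maxDist k ζ x ≤ (x : ℝ) ^ (-η)}.Infinite) :
    (η : EReal) ≤ lambdaConst k ζ :=
  le_sSup (Set.mem_insert_of_mem _ ⟨η, rfl, h⟩)

lemma lambda_le {k : ℕ} {ζ : ℝ} {c : EReal} (hc : 0 ≤ c)
    (h : ∀ η : ℝ, {x : ℕ | 0 < x ∧ 0 < maxDist k ζ x ∧ maxDist k ζ x ≤ (x : ℝ) ^ (-η)}.Infinite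
      → (η : EReal) ≤ c) : lambdaConst k ζ ≤ c := by
  refine sSup_le ?_
  rintro e (rfl | ⟨η, rfl, hinf⟩)
  · exact hc
  · exact h η hinf

lemma ereal_le_of_forall_lt {r : ℝ} {L : EReal} (h0 : 0 ≤ L)
    (h : ∀ η : ℝ, η < r → (η : EReal) ≤ L) : (r : EReal) ≤ L := by
  by_contra hc
  push_neg at hc
  obtain ⟨m, hm1, hm2⟩ := exists_between hc
  have hmb : m ≠ ⊥ := by
    intro hb
    rw [hb] at hm1
    exact absurd (h0.trans_lt hm1) (by simp)
  have hmt : m ≠ ⊤ := by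
    intro ht
    rw [ht] at hm2
    exact absurd hm2 (by simp)
  lift m to ℝ using ⟨hmt, hmb⟩
  exact absurd (h m (by exact_mod_cast hm2)) (not_le.2 hm1)

lemma exists_pos_lb {ζ : ℝ} (hirr : Irrational ζ) (N : ℕ) :
    ∃ c : ℝ, 0 < c ∧ ∀ b : ℕ, 1 ≤ b → b ≤ N → c ≤ distNearestInt (ζ * b) := by
  induction N with
  | zero => exact ⟨1, one_pos, fun b hb hbN => by omega⟩
  | succ n ih =>
    obtain ⟨c, hc, h⟩ := ih
    refine ⟨min c (distNearestInt (ζ * (n+1 : ℕ))),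
      lt_min hc (dni_pos (hirr.mul_natCast (by omega))), ?_⟩
    intro b hb hbN
    rcases eq_or_lt_of_le hbN with rfl | hlt
    · exact min_le_right _ _
    · exact (min_le_left _ _).trans (h b hb (by omega))

lemma approx_exists {ζ : ℝ} (hirr : Irrational ζ) (hfin : lambdaConst 1 ζ < ⊤)
    {w : ℝ} (hw : w < (lambdaConst 1 ζ).toReal ∨ w ≤ 0) :
    {q : ℕ | 0 < q ∧ 0 < distNearestInt (ζ * q) ∧
      distNearestInt (ζ * q) ≤ (q:ℝ) ^ (-w)}.Infinite := by
  rcases le_or_gt w 0 with hw0 | hw0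
  · apply Set.infinite_of_forall_exists_gt
    intro a
    refine ⟨a+1, ⟨by omega, dni_pos (hirr.mul_natCast (by omega)), ?_⟩, by omega⟩
    calc distNearestInt (ζ * (a+1 : ℕ)) ≤ 1/2 := dni_le_half _
      _ ≤ 1 := by norm_num
      _ ≤ ((a+1 : ℕ):ℝ) ^ (-w) :=
        Real.one_le_rpow (by exact_mod_cast Nat.le_add_left 1 a) (by linarith)
  · have hw' : (w : EReal) < lambdaConst 1 ζ := by
      rcases hw with h | h
      · calc (w:EReal) < ((lambdaConst 1 ζ).toReal : EReal) := by exact_mod_cast h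
          _ = lambdaConst 1 ζ := EReal.coe_toReal hfin.ne (lambda_ne_bot 1 ζ)
      · linarith
    rw [lambdaConst, lt_sSup_iff] at hw'
    obtain ⟨e, he, hlt⟩ := hw'
    rcases he with rfl | ⟨η, rfl, hinf⟩
    · exact absurd hlt (by exact_mod_cast not_lt.2 hw0.le)
    · have hηw : w ≤ η := by
        have : (w : EReal) < (η : EReal) := hlt
        exact_mod_cast this.le
      refine Set.Infinite.mono ?_ hinf
      rintro x ⟨hx, hd, hle⟩
      rw [maxDist_one] at hd hle
      refine ⟨hx, hd, hle.trans ?_⟩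
      apply Real.rpow_le_rpow_of_exponent_le (by exact_mod_cast hx) (by linarith)
lemma abs_pow_sub_pow {a b M : ℝ} (ha : |a| ≤ M) (hb : |b| ≤ M) (j : ℕ) :
    |a ^ (j+1) - b ^ (j+1)| ≤ (j+1 : ℝ) * |a - b| * M ^ j := by
  have hM : 0 ≤ M := (abs_nonneg a).trans ha
  induction j with
  | zero => simp
  | succ n ih =>
    have h1 : a ^ (n+2) - b ^ (n+2) = a * (a ^ (n+1) - b ^ (n+1)) + (a - b) * b ^ (n+1) := by
      ring
    rw [show n+1+1 = n+2 from rfl, h1]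
    calc |a * (a ^ (n+1) - b ^ (n+1)) + (a - b) * b ^ (n+1)|
        ≤ |a| * |a ^ (n+1) - b ^ (n+1)| + |a - b| * |b| ^ (n+1) := by
          rw [← abs_pow, ← abs_mul, ← abs_mul]; exact abs_add_le _ _
      _ ≤ M * ((n+1 : ℝ) * |a - b| * M ^ n) + |a - b| * M ^ (n+1) := by
          gcongr
      _ = ((n+1 : ℕ) + 1 : ℝ) * |a - b| * M ^ (n+1) := by push_cast; ring
lemma power_lower {ζ : ℝ} (hirr : Irrational ζ) {k : ℕ} (hk : 1 ≤ k) {w η : ℝ}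
    (hηw : (k:ℝ) * η + k - 1 < w)
    (hq : {q : ℕ | 0 < q ∧ 0 < distNearestInt (ζ * q) ∧
      distNearestInt (ζ * q) ≤ (q:ℝ) ^ (-w)}.Infinite) :
    {x : ℕ | 0 < x ∧ 0 < maxDist k ζ x ∧ maxDist k ζ x ≤ (x : ℝ) ^ (-η)}.Infinite := by
  have hC1 : (1:ℝ) ≤ |ζ| + 1 := by linarith [abs_nonneg ζ]
  set C : ℝ := |ζ| + 1 with hC
  set K : ℝ := k * C ^ (k-1) with hK
  have hK0 : 0 < K := by
    apply mul_pos (by exact_mod_cast hk)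
    positivity
  set e : ℝ := w - ((k:ℝ) - 1) - k * η with he
  have he0 : 0 < e := by rw [he]; linarith
  apply Set.infinite_of_forall_exists_gt
  intro N
  obtain ⟨q, hqmem, hqgt⟩ := hq.exists_gt (max N ⌈K ^ (1/e)⌉₊)
  obtain ⟨hq0, hd0, hdle⟩ := hqmem
  have hqN : N < q := lt_of_le_of_lt (le_max_left _ _) hqgt
  have hr1 : (1:ℝ) ≤ (q:ℝ) := by exact_mod_cast hq0
  have hr0 : (0:ℝ) < (q:ℝ) := by linarith
  have hrK : K ≤ (q:ℝ) ^ e := by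
    have h1 : K ^ (1/e) ≤ (q:ℝ) := by
      refine (Nat.le_ceil _).trans ?_
      exact_mod_cast ((le_max_right _ _).trans hqgt.le)
    calc K = (K ^ (1/e)) ^ e := by
          rw [← Real.rpow_mul hK0.le, one_div_mul_cancel he0.ne', Real.rpow_one]
      _ ≤ (q:ℝ) ^ e := Real.rpow_le_rpow (by positivity) h1 he0.le
  have hxpos : 0 < q ^ k := pow_pos hq0 k
  refine ⟨q ^ k, ⟨hxpos, maxDist_pos hk hirr hxpos, ?_⟩,
    lt_of_lt_of_le hqN (Nat.le_self_pow (by omega) q)⟩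
  set p : ℤ := round (ζ * q) with hp
  set d : ℝ := distNearestInt (ζ * q) with hd
  have habsq : |ζ * (q:ℝ)| = |ζ| * q := by rw [abs_mul, abs_of_nonneg hr0.le]
  have hb1 : |ζ * (q:ℝ)| ≤ C * q := by
    rw [habsq, hC]
    nlinarith [abs_nonneg ζ]
  have hb2 : |(p:ℝ)| ≤ C * q := by
    have h2 : |ζ * q - p| ≤ 1/2 := abs_sub_round (ζ * q)
    have t1 : |(p:ℝ)| - |ζ * q| ≤ |(p:ℝ) - ζ * q| := abs_sub_abs_le_abs_sub _ _
    rw [abs_sub_comm] at t1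
    have h4 : (1:ℝ)/2 ≤ C * q - |ζ * q| := by
      rw [habsq, hC]
      nlinarith [abs_nonneg ζ]
    nlinarith [t1, h2, h4]
  apply maxDist_le (by positivity)
  intro j hj1 hjk
  obtain ⟨j', rfl⟩ : ∃ j', j = j' + 1 := ⟨j - 1, by omega⟩
  have key : distNearestInt (ζ ^ (j'+1) * ((q ^ k : ℕ):ℝ)) ≤ K * (q:ℝ) ^ (k-1) * d := by
    refine (dni_le _ (p ^ (j'+1) * (q:ℤ) ^ (k - (j'+1)))).trans ?_
    have hsplit : ζ ^ (j'+1) * ((q ^ k : ℕ):ℝ) - ((p ^ (j'+1) * (q:ℤ) ^ (k-(j'+1)) : ℤ):ℝ)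
        = ((ζ * q) ^ (j'+1) - (p:ℝ) ^ (j'+1)) * (q:ℝ) ^ (k - (j'+1)) := by
      have hqk : ((q:ℝ)) ^ k = (q:ℝ) ^ (j'+1) * (q:ℝ) ^ (k - (j'+1)) := by
        rw [← pow_add]
        congr 1
        omega
      push_cast
      rw [hqk]
      ring
    rw [hsplit, abs_mul, abs_of_nonneg (by positivity : (0:ℝ) ≤ (q:ℝ) ^ (k - (j'+1)))]
    have habs : |ζ * q - (p:ℝ)| = d := rfl
    have hcast1 : ((j':ℝ)+1) ≤ (k:ℝ) := by exact_mod_cast hjk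
    calc |(ζ * q) ^ (j'+1) - (p:ℝ) ^ (j'+1)| * (q:ℝ) ^ (k - (j'+1))
        ≤ ((j'+1 : ℝ) * d * (C * q) ^ j') * (q:ℝ) ^ (k - (j'+1)) := by
          have h5 := abs_pow_sub_pow hb1 hb2 j'
          rw [habs] at h5
          gcongr
      _ = ((j':ℝ)+1) * C ^ j' * ((q:ℝ) ^ j' * (q:ℝ) ^ (k - (j'+1))) * d := by
          rw [mul_pow]; ring
      _ ≤ (k:ℝ) * C ^ (k-1) * ((q:ℝ) ^ j' * (q:ℝ) ^ (k - (j'+1))) * d := by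
          gcongr <;> first | exact dni_nonneg _ | exact hC1 | exact hcast1 | omega | positivity
      _ = K * (q:ℝ) ^ (k-1) * d := by
          have hexp : j' + (k - (j'+1)) = k - 1 := by omega
          rw [← pow_add, hexp, hK]
  refine key.trans ?_
  calc K * (q:ℝ) ^ (k-1) * d
      ≤ ((q:ℝ) ^ e) * (q:ℝ) ^ (k-1) * ((q:ℝ) ^ (-w)) :=
        mul_le_mul (mul_le_mul_of_nonneg_right hrK (by positivity)) hdle (dni_nonneg _)
          (by positivity)
    _ = (q:ℝ) ^ (e + ((k-1:ℕ):ℝ) + (-w)) := by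
        rw [Real.rpow_add hr0, Real.rpow_add hr0, Real.rpow_natCast]
    _ = ((q ^ k : ℕ):ℝ) ^ (-η) := by
        have hcast : (((q ^ k : ℕ)):ℝ) ^ (-η) = (q:ℝ) ^ ((k:ℝ) * (-η)) := by
          push_cast
          rw [← Real.rpow_natCast (q:ℝ) k, ← Real.rpow_mul hr0.le]
        rw [hcast]
        congr 1
        have hk' : ((k-1:ℕ):ℝ) = (k:ℝ) - 1 := by
          push_cast [Nat.cast_sub hk]
          ring
        rw [hk', he]
        ring
set_option linter.unreachableTactic false
set_option linter.unusedTactic false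

lemma dirichlet_sim (ζ : ℝ) {k Q : ℕ} (hk : 1 ≤ k) (hQ : 1 ≤ Q) :
    ∃ x : ℕ, 1 ≤ x ∧ x ≤ Q ^ k ∧ ∀ j, 1 ≤ j → j ≤ k →
      distNearestInt (ζ ^ j * x) < 1 / Q := by
  have hQR : (0:ℝ) < Q := by exact_mod_cast hQ
  have hbox : ∀ y : ℝ, 0 ≤ ⌊(Q:ℝ) * Int.fract y⌋ ∧ ⌊(Q:ℝ) * Int.fract y⌋ < Q := by
    intro y
    constructor
    · exact Int.floor_nonneg.2 (mul_nonneg hQR.le (Int.fract_nonneg y))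
    · have h1 : (Q:ℝ) * Int.fract y < Q := by
        nlinarith [Int.fract_lt_one y, Int.fract_nonneg y]
      exact_mod_cast Int.floor_lt.2 (by exact_mod_cast h1)
  set f : ℕ → (Fin k → Fin Q) := fun x j =>
    ⟨(⌊(Q:ℝ) * Int.fract (ζ ^ ((j:ℕ)+1) * x)⌋).toNat, by
      have h := hbox (ζ ^ ((j:ℕ)+1) * x)
      omega⟩ with hf
  have key : ∀ a b : ℕ, b ≤ Q ^ k → a < b → f a = f b →
      ∃ x : ℕ, 1 ≤ x ∧ x ≤ Q ^ k ∧ ∀ j, 1 ≤ j → j ≤ k →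
        distNearestInt (ζ ^ j * x) < 1 / Q := by
    intro a b hbQ hlt hfab
    refine ⟨b - a, by omega, by omega, ?_⟩
    intro j hj1 hjk
    set i : Fin k := ⟨j - 1, by omega⟩ with hi
    have hji : (i:ℕ) + 1 = j := by simp [hi]; omega
    have hcong := congrFun hfab i
    rw [hf] at hcong
    simp only [Fin.mk.injEq] at hcong
    rw [hji] at hcong
    have hflr : ⌊(Q:ℝ) * Int.fract (ζ ^ j * a)⌋ = ⌊(Q:ℝ) * Int.fract (ζ ^ j * b)⌋ := by
      have h1 := (hbox (ζ ^ j * a)).1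
      have h2 := (hbox (ζ ^ j * b)).1
      omega
    have habs1 : |(Q:ℝ) * Int.fract (ζ ^ j * a) - (Q:ℝ) * Int.fract (ζ ^ j * b)| < 1 :=
      Int.abs_sub_lt_one_of_floor_eq_floor hflr
    have habs2 : |Int.fract (ζ ^ j * b) - Int.fract (ζ ^ j * a)| < 1 / Q := by
      rw [lt_div_iff₀ hQR, mul_comm]
      calc (Q:ℝ) * |Int.fract (ζ ^ j * b) - Int.fract (ζ ^ j * a)|
          = |(Q:ℝ) * (Int.fract (ζ ^ j * b) - Int.fract (ζ ^ j * a))| := by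
            rw [abs_mul, abs_of_pos hQR]
        _ = |(Q:ℝ) * Int.fract (ζ ^ j * a) - (Q:ℝ) * Int.fract (ζ ^ j * b)| := by
            rw [mul_sub, abs_sub_comm]
        _ < 1 := habs1
    refine lt_of_le_of_lt (dni_le _ (⌊ζ ^ j * b⌋ - ⌊ζ ^ j * a⌋)) ?_
    have e1 : (⌊ζ ^ j * (b:ℝ)⌋:ℝ) + Int.fract (ζ ^ j * b) = ζ ^ j * b := Int.floor_add_fract _
    have e2 : (⌊ζ ^ j * (a:ℝ)⌋:ℝ) + Int.fract (ζ ^ j * a) = ζ ^ j * a := Int.floor_add_fract _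
    have heq : ζ ^ j * ((b - a : ℕ):ℝ) - ((⌊ζ ^ j * (b:ℝ)⌋ - ⌊ζ ^ j * (a:ℝ)⌋ : ℤ):ℝ)
        = Int.fract (ζ ^ j * b) - Int.fract (ζ ^ j * a) := by
      push_cast [Nat.cast_sub hlt.le]
      linarith
    rw [heq]
    exact habs2
  have hcard : (Finset.univ : Finset (Fin k → Fin Q)).card < (Finset.range (Q ^ k + 1)).card := by
    rw [Finset.card_univ, Finset.card_range]
    simp [Fintype.card_fun]
  obtain ⟨a, ha, b, hb, hab, hfab⟩ :=
    Finset.exists_ne_map_eq_of_card_lt_of_maps_to hcard (f := f) (fun a _ => Finset.mem_univ _)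
  rw [Finset.mem_range] at ha hb
  rcases hab.lt_or_gt with h | h
  · exact key a b (by omega) h hfab
  · exact key b a (by omega) h hfab.symm

lemma dirichlet_lower {ζ : ℝ} (hirr : Irrational ζ) {k : ℕ} (hk : 1 ≤ k) :
    {x : ℕ | 0 < x ∧ 0 < maxDist k ζ x ∧
      maxDist k ζ x ≤ (x : ℝ) ^ (-((1:ℝ)/k))}.Infinite := by
  apply Set.infinite_of_forall_exists_gt
  intro N
  obtain ⟨c, hc0, hc⟩ := exists_pos_lb hirr N
  set Q : ℕ := ⌈1/c⌉₊ + 1 with hQdef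
  have hQ1 : 1 ≤ Q := by omega
  have hQR : (0:ℝ) < Q := by exact_mod_cast hQ1
  have hQc : 1 / (Q:ℝ) < c := by
    rw [div_lt_iff₀ hQR]
    have h1 : 1/c < (Q:ℝ) := by
      refine lt_of_le_of_lt (Nat.le_ceil _) ?_
      exact_mod_cast Nat.lt_succ_self _
    rw [div_lt_iff₀ hc0] at h1
    linarith
  obtain ⟨x, hx1, hxQ, hxd⟩ := dirichlet_sim ζ hk hQ1
  have hxpos : 0 < x := hx1
  have hxR1 : (1:ℝ) ≤ (x:ℝ) := by exact_mod_cast hx1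
  have hmd : maxDist k ζ x ≤ 1 / Q :=
    maxDist_le (by positivity) fun j h1 h2 => (hxd j h1 h2).le
  have hrpow : 1 / (Q:ℝ) ≤ (x:ℝ) ^ (-((1:ℝ)/k)) := by
    have hkR : (0:ℝ) < k := by exact_mod_cast hk
    have h1 : (x:ℝ) ^ ((1:ℝ)/k) ≤ (Q:ℝ) := by
      calc (x:ℝ) ^ ((1:ℝ)/k) ≤ ((Q:ℝ) ^ (k:ℕ)) ^ ((1:ℝ)/k) := by
            apply Real.rpow_le_rpow (by positivity) (by exact_mod_cast hxQ) (by positivity)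
        _ = (Q:ℝ) := by
            rw [← Real.rpow_natCast (Q:ℝ) k, ← Real.rpow_mul hQR.le,
              mul_one_div_cancel hkR.ne', Real.rpow_one]
    have hx0 : (0:ℝ) < (x:ℝ) ^ ((1:ℝ)/(k:ℝ)) := Real.rpow_pos_of_pos (by linarith) _
    rw [Real.rpow_neg (by positivity : (0:ℝ) ≤ (x:ℝ)), ← one_div]
    exact one_div_le_one_div_of_le hx0 h1
  refine ⟨x, ⟨hxpos, maxDist_pos hk hirr hxpos, hmd.trans hrpow⟩, ?_⟩
  by_contra hxN
  push_neg at hxN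
  have h2 : c ≤ distNearestInt (ζ * x) := hc x hx1 hxN
  have h3 : distNearestInt (ζ * x) ≤ maxDist k ζ x := by
    have h4 := le_maxDist le_rfl hk ζ x
    rwa [pow_one] at h4
  linarith
lemma core_upper {ζ : ℝ} (hirr : Irrational ζ) {k : ℕ} (hk : 1 ≤ k) {η : ℝ} (hη : 1 < η)
    (hinf : {x : ℕ | 0 < x ∧ 0 < maxDist k ζ x ∧ maxDist k ζ x ≤ (x : ℝ) ^ (-η)}.Infinite) :
    {b : ℕ | 0 < b ∧ 0 < distNearestInt (ζ * b) ∧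
      distNearestInt (ζ * b) ≤ (b:ℝ) ^ (-((k:ℝ) * η + (k:ℝ) - 1))}.Infinite := by
  have hC1 : (1:ℝ) ≤ |ζ| + 1 := by linarith [abs_nonneg ζ]
  set C : ℝ := |ζ| + 1 with hC
  have hC0 : (0:ℝ) < C := by linarith
  set ν : ℝ := (k:ℝ) * η + (k:ℝ) - 1 with hν
  set E : ℝ := 2 * C ^ k + 2 with hE
  have hE1 : (1:ℝ) ≤ E := by
    have : (1:ℝ) ≤ C ^ k := one_le_pow₀ hC1
    rw [hE]; linarith
  set T : ℝ := max 1 (E ^ (1/(η-1))) with hT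
  have main : ∀ x : ℕ, 0 < x → maxDist k ζ x ≤ (x:ℝ)^(-η) → T < (x:ℝ) →
      ∃ b : ℕ, 0 < b ∧ distNearestInt (ζ * b) ≤ (b:ℝ)^(-ν) ∧
        distNearestInt (ζ * b) ≤ (x:ℝ)^(-η) := by
    intro x hx0 hxd hxT
    set X : ℝ := (x:ℝ) with hXdef
    have hX1 : (1:ℝ) < X := lt_of_le_of_lt (le_max_left 1 _) hxT
    have hX0 : (0:ℝ) < X := by linarith
    have hδ0 : (0:ℝ) < X^(-η) := Real.rpow_pos_of_pos hX0 _
    have hdj : ∀ j, 1 ≤ j → j ≤ k → |ζ^j * X - (round (ζ^j * X) : ℤ)| ≤ X^(-η) :=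
      fun j h1 h2 => le_trans (le_maxDist h1 h2 ζ x) hxd
    set p : ℕ → ℤ := fun j => round (ζ^j * X) with hp
    have hbdj : ∀ j, j ≤ k → |ζ^j * X| ≤ C^k * X := by
      intro j hj
      rw [abs_mul, abs_pow, abs_of_nonneg hX0.le]
      have h1 : |ζ|^j ≤ C^j := pow_le_pow_left₀ (abs_nonneg ζ) (by rw [hC]; linarith) j
      have h2 : C^j ≤ C^k := pow_le_pow_right₀ hC1 hj
      exact mul_le_mul_of_nonneg_right (h1.trans h2) hX0.le
    have hpj : ∀ j, 1 ≤ j → j ≤ k → |(p j : ℝ)| ≤ (C^k + 1) * X := by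
      intro j h1 h2
      have t1 : |ζ^j * X - (p j:ℝ)| ≤ 1/2 := abs_sub_round (ζ^j * X)
      have t2 : |(p j:ℝ)| - |ζ^j * X| ≤ |(p j:ℝ) - ζ^j * X| := abs_sub_abs_le_abs_sub _ _
      rw [abs_sub_comm] at t2
      have t3 := hbdj j h2
      have t4 : (1:ℝ)/2 ≤ X := by linarith
      nlinarith [pow_pos hC0 k]
    have hA : ∀ j, 1 ≤ j → j + 1 ≤ k → p 1 * p j = p (j+1) * (x:ℤ) := by
      intro j hj1 hjk
      have hr : ((p 1 * p j - p (j+1) * (x:ℤ) : ℤ):ℝ)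
          = (p 1:ℝ) * ((p j:ℝ) - ζ^j * X) + ζ^j * X * ((p 1:ℝ) - ζ^1 * X)
            + (ζ^(j+1) * X - (p (j+1):ℝ)) * X := by
        push_cast
        ring
      have t1 : |(p 1:ℝ) * ((p j:ℝ) - ζ^j * X)| ≤ ((C^k + 1) * X) * X^(-η) := by
        rw [abs_mul]
        refine mul_le_mul (hpj 1 le_rfl hk) ?_ (abs_nonneg _) (by positivity)
        rw [abs_sub_comm]
        exact hdj j hj1 (by omega)
      have t2 : |ζ^j * X * ((p 1:ℝ) - ζ^1 * X)| ≤ (C^k * X) * X^(-η) := by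
        rw [abs_mul]
        refine mul_le_mul (hbdj j (by omega)) ?_ (abs_nonneg _) (by positivity)
        rw [abs_sub_comm]
        exact hdj 1 le_rfl hk
      have t3 : |(ζ^(j+1) * X - (p (j+1):ℝ)) * X| ≤ X^(-η) * X := by
        rw [abs_mul, abs_of_nonneg hX0.le]
        exact mul_le_mul_of_nonneg_right (hdj (j+1) (by omega) hjk) hX0.le
      have habs : |((p 1 * p j - p (j+1) * (x:ℤ) : ℤ):ℝ)| ≤ E * X * X^(-η) := by
        rw [hr]
        calc |(p 1:ℝ) * ((p j:ℝ) - ζ^j * X) + ζ^j * X * ((p 1:ℝ) - ζ^1 * X)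
              + (ζ^(j+1) * X - (p (j+1):ℝ)) * X|
            ≤ |(p 1:ℝ) * ((p j:ℝ) - ζ^j * X)| + |ζ^j * X * ((p 1:ℝ) - ζ^1 * X)|
              + |(ζ^(j+1) * X - (p (j+1):ℝ)) * X| := abs_add_three _ _ _
          _ ≤ ((C^k + 1) * X) * X^(-η) + (C^k * X) * X^(-η) + X^(-η) * X := by
              linarith
          _ = E * X * X^(-η) := by rw [hE]; ring
      have hlt1 : E * X * X^(-η) < 1 := by
        have hXe : E < X ^ (η - 1) := by
          have h1 : E ^ (1/(η-1)) < X := lt_of_le_of_lt (le_max_right 1 _) hxT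
          calc E = (E ^ (1/(η-1))) ^ (η-1) := by
                rw [← Real.rpow_mul (by linarith : (0:ℝ) ≤ E),
                  one_div_mul_cancel (by linarith : η - 1 ≠ 0), Real.rpow_one]
            _ < X ^ (η-1) := by
                apply Real.rpow_lt_rpow (by positivity) h1 (by linarith)
        have hXpos : (0:ℝ) < X ^ (η - 1) := Real.rpow_pos_of_pos hX0 _
        have e1 : X * X^(-η) = (X ^ (η-1))⁻¹ := by
          calc X * X^(-η) = X^(1:ℝ) * X^(-η) := by rw [Real.rpow_one]
            _ = X^(1 + -η) := (Real.rpow_add hX0 1 (-η)).symm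
            _ = X^(-(η-1)) := by congr 1; ring
            _ = (X^(η-1))⁻¹ := Real.rpow_neg hX0.le (η-1)
        rw [mul_assoc, e1]
        rw [mul_inv_lt_iff₀ hXpos, one_mul]
        exact hXe
      have hz : |((p 1 * p j - p (j+1) * (x:ℤ) : ℤ))| < 1 := by
        have : |((p 1 * p j - p (j+1) * (x:ℤ) : ℤ):ℝ)| < 1 := lt_of_le_of_lt habs hlt1
        exact_mod_cast this
      have hz0 : (p 1 * p j - p (j+1) * (x:ℤ) : ℤ) = 0 := Int.abs_lt_one_iff.1 hz
      linarith [hz0]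
    have hpow : ∀ j, 1 ≤ j → j ≤ k → p 1 ^ j = p j * (x:ℤ)^(j-1) := by
      intro j
      induction j with
      | zero => omega
      | succ n ih =>
        intro h1 h2
        rcases Nat.lt_or_ge 1 (n+1) with h | h
        · have hn1 : 1 ≤ n := by omega
          have hnk : n ≤ k := by omega
          have ihn := ih hn1 hnk
          have hAn := hA n hn1 (by omega)
          calc p 1 ^ (n+1) = (p 1 ^ n) * p 1 := pow_succ _ _
            _ = p n * (x:ℤ)^(n-1) * p 1 := by rw [ihn]
            _ = (p 1 * p n) * (x:ℤ)^(n-1) := by ring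
            _ = (p (n+1) * (x:ℤ)) * (x:ℤ)^(n-1) := by rw [hAn]
            _ = p (n+1) * (x:ℤ)^(n-1+1) := by rw [pow_succ]; ring
            _ = p (n+1) * (x:ℤ)^(n+1-1) := by rw [Nat.sub_add_cancel hn1]; simp
        · have hn0 : n = 0 := by omega
          subst hn0
          simp
    -- gcd decomposition
    have hx0' : (0:ℤ) < (x:ℤ) := by exact_mod_cast hx0
    have hxZ : ((x:ℤ)) ≠ 0 := hx0'.ne'
    set g : ℕ := Int.gcd (p 1) (x:ℤ) with hg
    have hg0 : 0 < g := Int.gcd_pos_of_ne_zero_right _ hxZ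
    have hg0' : (0:ℤ) < (g:ℤ) := by exact_mod_cast hg0
    set a : ℤ := p 1 / g with ha
    set b : ℤ := (x:ℤ) / g with hb
    have hag : a * g = p 1 := Int.ediv_mul_cancel (Int.gcd_dvd_left _ _)
    have hbg : b * g = (x:ℤ) := Int.ediv_mul_cancel (Int.gcd_dvd_right _ _)
    have hb0 : 0 < b := by
      by_contra h
      push_neg at h
      have h2 : b * (g:ℤ) ≤ 0 := mul_nonpos_iff.2 (Or.inr ⟨h, hg0'.le⟩)
      rw [hbg] at h2
      omega
    have hco : IsCoprime a b := by
      rw [Int.isCoprime_iff_gcd_eq_one]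
      exact Int.gcd_div_gcd_div_gcd (by exact_mod_cast hg0)
    have hgk := hpow k hk le_rfl
    have hkey : a ^ k * g = p k * b ^ (k - 1) := by
      have h1 : (a * g) ^ k = p k * (b * g) ^ (k-1) := by rw [hag, hbg]; exact hgk
      have hgne : ((g:ℤ)) ^ (k-1) ≠ 0 := pow_ne_zero _ hg0'.ne'
      apply mul_right_cancel₀ hgne
      calc a^k * g * (g:ℤ)^(k-1) = a^k * (g:ℤ)^(k-1+1) := by rw [pow_succ]; ring
        _ = (a*g)^k := by rw [Nat.sub_add_cancel hk, mul_pow]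
        _ = p k * (b*g)^(k-1) := h1
        _ = p k * b^(k-1) * (g:ℤ)^(k-1) := by rw [mul_pow]; ring
    have hdvd : b^(k-1) ∣ (g:ℤ) := by
      have h2 : b^(k-1) ∣ a^k * g := ⟨p k, by rw [hkey]; ring⟩
      exact (IsCoprime.pow hco.symm).dvd_of_dvd_mul_left h2
    have hbk : b^k ≤ (x:ℤ) := by
      have h3 : b^(k-1) ≤ (g:ℤ) := Int.le_of_dvd hg0' hdvd
      calc b^k = b * b^(k-1) := by
            conv_lhs => rw [show k = k-1+1 by omega]
            rw [pow_succ]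
            ring
        _ ≤ b * g := mul_le_mul_of_nonneg_left h3 hb0.le
        _ = (x:ℤ) := hbg
    -- pass to reals
    set bb : ℕ := b.toNat with hbbdef
    have hbbZ : ((bb:ℤ)) = b := Int.toNat_of_nonneg hb0.le
    have hbb0 : 0 < bb := by omega
    have hbbR0 : (0:ℝ) < (bb:ℝ) := by exact_mod_cast hbb0
    have hgR : (0:ℝ) < (g:ℝ) := by exact_mod_cast hg0
    have hgR1 : (1:ℝ) ≤ (g:ℝ) := by exact_mod_cast Nat.one_le_cast.2 hg0
    have hXeq : X = (bb:ℝ) * g := by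
      have e1 : ((b * g : ℤ):ℝ) = X := by rw [hbg, hXdef]; push_cast; ring
      rw [← e1, ← hbbZ]
      push_cast
      ring
    have hfact : ζ * X - (p 1 : ℝ) = (ζ * bb - a) * g := by
      have e2 : ((a * g : ℤ):ℝ) = (p 1 : ℝ) := by rw [hag]
      rw [← e2, hXeq]
      push_cast
      ring
    have hdist1 : |ζ * X - (p 1:ℝ)| ≤ X^(-η) := by
      have h5 := hdj 1 le_rfl hk
      rw [pow_one] at h5
      have hp1 : p 1 = round (ζ * X) := by
        rw [show p 1 = round (ζ ^ 1 * X) from rfl, pow_one]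
      rwa [hp1]
    have hkey2 : |ζ * (bb:ℝ) - ((a:ℤ):ℝ)| ≤ X^(-η) / g := by
      rw [le_div_iff₀ hgR]
      calc |ζ * (bb:ℝ) - ((a:ℤ):ℝ)| * g = |(ζ * bb - (a:ℤ)) * g| := by
            rw [abs_mul, abs_of_pos hgR]
        _ = |ζ * X - (p 1:ℝ)| := by rw [hfact]
        _ ≤ X^(-η) := hdist1
    have hmain : distNearestInt (ζ * bb) ≤ X^(-η) / g := (dni_le _ a).trans hkey2
    have hmain1 : distNearestInt (ζ * bb) ≤ X^(-η) :=
      hmain.trans (div_le_self hδ0.le hgR1)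
    have hXbk : ((bb:ℝ))^(k:ℕ) ≤ X := by
      have h6 : ((b^k : ℤ):ℝ) ≤ ((x:ℤ):ℝ) := by exact_mod_cast hbk
      rw [← hbbZ] at h6
      push_cast at h6
      exact h6
    have e4 : (bb:ℝ) / X = 1 / g := by
      rw [hXeq]
      field_simp
    have h5 : X^(-η) / g = (bb:ℝ) * X^(-(η+1)) := by
      have e3 : X^(-η-1) = X^(-η) / X := Real.rpow_sub_one hX0.ne' (-η)
      calc X^(-η)/g = X^(-η) * ((bb:ℝ)/X) := by rw [e4]; ring
        _ = (bb:ℝ) * (X^(-η)/X) := by ring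
        _ = (bb:ℝ) * X^(-(η+1)) := by rw [show -(η+1) = -η - 1 by ring, e3]
    have h6 : X^(-(η+1)) ≤ (((bb:ℝ))^(k:ℕ))^(-(η+1)) :=
      Real.rpow_le_rpow_of_nonpos (by positivity) hXbk (by linarith)
    have h7 : (bb:ℝ) * (((bb:ℝ))^(k:ℕ))^(-(η+1)) = (bb:ℝ)^(-ν) := by
      rw [← Real.rpow_natCast (bb:ℝ) k, ← Real.rpow_mul hbbR0.le]
      have e5 : (bb:ℝ) * (bb:ℝ)^((k:ℝ) * (-(η+1))) = (bb:ℝ)^(1 + (k:ℝ)*(-(η+1))) := by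
        rw [Real.rpow_add hbbR0, Real.rpow_one]
      rw [e5]
      congr 1
      rw [hν]
      ring
    refine ⟨bb, hbb0, ?_, hmain1⟩
    calc distNearestInt (ζ * bb) ≤ X^(-η) / g := hmain
      _ = (bb:ℝ) * X^(-(η+1)) := h5
      _ ≤ (bb:ℝ) * (((bb:ℝ))^(k:ℕ))^(-(η+1)) := by
          exact mul_le_mul_of_nonneg_left h6 hbbR0.le
      _ = (bb:ℝ)^(-ν) := h7
  -- wrapper: infinitude
  apply Set.infinite_of_forall_exists_gt
  intro N
  obtain ⟨c, hc0, hc⟩ := exists_pos_lb hirr N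
  obtain ⟨x, ⟨hx0, hmd0, hmdle⟩, hxgt⟩ := hinf.exists_gt (⌈max T (1/c)⌉₊)
  have hxR : max T (1/c) < (x:ℝ) := by
    refine lt_of_le_of_lt (Nat.le_ceil _) ?_
    exact_mod_cast hxgt
  have hxT : T < (x:ℝ) := lt_of_le_of_lt (le_max_left _ _) hxR
  have hxc : 1/c < (x:ℝ) := lt_of_le_of_lt (le_max_right _ _) hxR
  have hX1 : (1:ℝ) < (x:ℝ) := lt_of_le_of_lt (le_max_left 1 _) hxT
  obtain ⟨b, hb0, hbν, hbx⟩ := main x hx0 hmdle hxT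
  refine ⟨b, ⟨hb0, dni_pos (hirr.mul_natCast hb0.ne'), hbν⟩, ?_⟩
  by_contra hbN
  push_neg at hbN
  have h2 : c ≤ distNearestInt (ζ * b) := hc b hb0 hbN
  have h3 : (x:ℝ)^(-η) ≤ (x:ℝ)^(-(1:ℝ)) :=
    Real.rpow_le_rpow_of_exponent_le hX1.le (by linarith)
  have h4 : (x:ℝ)^(-(1:ℝ)) < c := by
    rw [Real.rpow_neg_one]
    rw [inv_lt_comm₀ (by linarith) hc0]
    rwa [← one_div]
  linarith
lemma lambda_one_ge {ζ : ℝ} {ν : ℝ}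
    (h : {b : ℕ | 0 < b ∧ 0 < distNearestInt (ζ * b) ∧
      distNearestInt (ζ * b) ≤ (b:ℝ) ^ (-ν)}.Infinite) :
    (ν : EReal) ≤ lambdaConst 1 ζ := by
  apply lambda_ge
  refine h.mono ?_
  rintro b ⟨h1, h2, h3⟩
  exact ⟨h1, by rw [maxDist_one]; exact h2, by rw [maxDist_one]; exact h3⟩

lemma le_toReal_of_coe_le {r : ℝ} {L : EReal} (h : (r:EReal) ≤ L) (hfin : L < ⊤) :
    r ≤ L.toReal := by
  have hb : L ≠ ⊥ := by
    intro hbot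
    rw [hbot] at h
    exact absurd h (by simp)
  lift L to ℝ using ⟨hfin.ne, hb⟩
  exact_mod_cast h

lemma lambda_le_max {ζ : ℝ} (hirr : Irrational ζ) (hfin : lambdaConst 1 ζ < ⊤) {k : ℕ}
    (hk : 1 ≤ k) :
    lambdaConst k ζ ≤ ((max 1 (((lambdaConst 1 ζ).toReal - k + 1) / k) : ℝ) : EReal) := by
  set L := (lambdaConst 1 ζ).toReal with hL
  have hkR : (0:ℝ) < (k:ℝ) := by exact_mod_cast hk
  apply lambda_le
  · exact_mod_cast EReal.coe_nonneg.2 (le_max_of_le_left zero_le_one)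
  intro η hinf
  rcases le_or_gt η 1 with h1 | h1
  · calc (η : EReal) ≤ ((1:ℝ) : EReal) := by exact_mod_cast h1
      _ ≤ _ := by exact_mod_cast le_max_left (1:ℝ) ((L - k + 1) / k)
  · have hb := core_upper hirr hk h1 hinf
    have hν : (k:ℝ) * η + (k:ℝ) - 1 ≤ L :=
      le_toReal_of_coe_le (lambda_one_ge hb) hfin
    have hη2 : η ≤ (L - k + 1) / k := by
      rw [le_div_iff₀ hkR]
      linarith
    calc (η : EReal) ≤ (((L - k + 1) / k : ℝ) : EReal) := by exact_mod_cast hη2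
      _ ≤ _ := by exact_mod_cast le_max_right (1:ℝ) ((L - k + 1) / k)

lemma lambda_lower_power {ζ : ℝ} (hirr : Irrational ζ) (hfin : lambdaConst 1 ζ < ⊤) {k : ℕ}
    (hk : 1 ≤ k) :
    ((((lambdaConst 1 ζ).toReal - k + 1) / k : ℝ) : EReal) ≤ lambdaConst k ζ := by
  set L := (lambdaConst 1 ζ).toReal with hL
  have hkR : (0:ℝ) < (k:ℝ) := by exact_mod_cast hk
  apply ereal_le_of_forall_lt (lambda_nonneg k ζ)
  intro η hη
  have h1 : (k:ℝ) * η + k - 1 < L := by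
    rw [lt_div_iff₀ hkR] at hη
    linarith
  set w : ℝ := ((k:ℝ) * η + k - 1 + L) / 2 with hw
  have hw1 : (k:ℝ) * η + k - 1 < w := by rw [hw]; linarith
  have hw2 : w < L := by rw [hw]; linarith
  exact lambda_ge (power_lower hirr hk hw1 (approx_exists hirr hfin (Or.inl hw2)))

theorem stmt4 (ζ : ℝ) (hirr : Irrational ζ) (hfin : lambdaConst 1 ζ < ⊤)
    (k₀ : ℤ) (hk₀ : k₀ = ⌈((lambdaConst 1 ζ).toReal + 1) / 2⌉) :
    (∀ k : ℕ, 1 ≤ k → (k : ℤ) ≤ k₀ - 1 →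
      lambdaConst k ζ = ((((lambdaConst 1 ζ).toReal - k + 1) / k : ℝ) : EReal)) ∧
    (∀ k : ℕ, k₀ ≤ (k : ℤ) →
      ((max (((lambdaConst 1 ζ).toReal - k + 1) / k) (1 / k) : ℝ) : EReal) ≤ lambdaConst k ζ ∧
      lambdaConst k ζ ≤ 1) := by
  set L := (lambdaConst 1 ζ).toReal with hL
  have hL0 : 0 ≤ L := by
    have h0 := EReal.toReal_le_toReal (lambda_nonneg 1 ζ) (by simp) hfin.ne
    simpa using h0
  constructor
  · intro k hk hkk₀
    have hkR : (0:ℝ) < (k:ℝ) := by exact_mod_cast hk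
    have h2k : 2 * (k:ℝ) - 1 < L := by
      have h1 : (k:ℤ) < k₀ := by omega
      rw [hk₀] at h1
      have h2 : ¬ ((L + 1) / 2 ≤ (k:ℤ)) := fun h => absurd (Int.ceil_le.2 h) (by omega)
      push_neg at h2
      have h3 : (k:ℝ) < (L + 1) / 2 := by exact_mod_cast h2
      linarith
    have hgt1 : (1:ℝ) < (L - k + 1) / k := by
      rw [lt_div_iff₀ hkR]
      linarith
    refine le_antisymm ?_ (lambda_lower_power hirr hfin hk)
    have := lambda_le_max hirr hfin hk
    rwa [max_eq_right hgt1.le] at this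
  · intro k hkk₀
    have hk : 1 ≤ k := by
      have h0 : (1:ℤ) ≤ k₀ := by
        rw [hk₀]
        refine Int.ceil_pos.2 ?_
        linarith
      omega
    have hkR : (0:ℝ) < (k:ℝ) := by exact_mod_cast hk
    have h2k : L ≤ 2 * (k:ℝ) - 1 := by
      have h1 : (L + 1) / 2 ≤ (k:ℤ) := Int.ceil_le.1 (by omega)
      have h2 : (L + 1) / 2 ≤ (k:ℝ) := by exact_mod_cast h1
      linarith
    constructor
    · rcases max_choice (((L - k + 1)) / k) (1 / (k:ℝ)) with h | h
      · rw [h]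
        exact lambda_lower_power hirr hfin hk
      · rw [h]
        exact lambda_ge (dirichlet_lower hirr hk)
    · have hle1 : (L - k + 1) / k ≤ 1 := by
        rw [div_le_one hkR]
        linarith
      have := lambda_le_max hirr hfin hk
      rwa [max_eq_left hle1] at this
end

section
/- Let 1 ≤ n ≤ m be integers and ζ a real number. If λ_n(ζ) > 1, then λ_m(ζ) ≥ (n·λ_n(ζ) + n − m)/m. If moreover λ_m(ζ) > 1, then λ_m(ζ) = (n·λ_n(ζ) + n − m)/m. -/
namespace Aux

def Sset (k : ℕ) (ζ : ℝ) (η : ℝ) : Set ℕ :=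
  {x : ℕ | 0 < x ∧ 0 < maxDist k ζ x ∧ maxDist k ζ x ≤ (x : ℝ) ^ (-η)}

lemma distNearestInt_nonneg (a : ℝ) : 0 ≤ distNearestInt a := abs_nonneg _

lemma distNearestInt_le_half (a : ℝ) : distNearestInt a ≤ 1/2 := abs_sub_round a

lemma distNearestInt_le (a : ℝ) (z : ℤ) : distNearestInt a ≤ |a - z| := round_le a z

lemma maxDist_le {k : ℕ} {ζ : ℝ} {x : ℕ} {c : ℝ} (hc : 0 ≤ c)
    (h : ∀ j ∈ Finset.Icc 1 k, distNearestInt (ζ ^ j * x) ≤ c) : maxDist k ζ x ≤ c := by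
  refine Real.iSup_le (fun j => Real.iSup_le (fun hj => h j hj) hc) hc

lemma le_maxDist {k : ℕ} {ζ : ℝ} {x : ℕ} {j : ℕ} (hj : j ∈ Finset.Icc 1 k) :
    distNearestInt (ζ ^ j * x) ≤ maxDist k ζ x := by
  have hb : BddAbove (Set.range fun j => ⨆ _ : j ∈ Finset.Icc 1 k, distNearestInt (ζ ^ j * x)) := by
    refine ⟨1/2, ?_⟩
    rintro _ ⟨i, rfl⟩
    by_cases hi : i ∈ Finset.Icc 1 k
    · simp only [ciSup_pos hi]; exact distNearestInt_le_half _
    · simp only [hi]; rw [Real.iSup_of_isEmpty]; norm_num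
  have := le_ciSup hb j
  rw [ciSup_pos hj] at this
  exact this

lemma maxDist_pos {k : ℕ} {ζ : ℝ} {x : ℕ} (hk : 1 ≤ k) (hζ : Irrational ζ) (hx : 0 < x) :
    0 < maxDist k ζ x := by
  have h1 : (1 : ℕ) ∈ Finset.Icc 1 k := by simp [hk]
  have hirr : Irrational (ζ ^ 1 * x) := by
    rw [pow_one]
    exact (hζ.mul_natCast hx.ne') 
  have : ζ ^ 1 * x ≠ (round (ζ ^ 1 * x) : ℤ) := hirr.ne_int _
  have hpos : 0 < distNearestInt (ζ ^ 1 * x) := abs_pos.mpr (sub_ne_zero.mpr this)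
  exact lt_of_lt_of_le hpos (le_maxDist h1)

end Aux

namespace Aux

/-- For any positive δ and ε there is K with t^(-δ) < ε for all t ≥ K. -/
lemma rpow_small {δ ε : ℝ} (hδ : 0 < δ) (hε : 0 < ε) :
    ∃ K : ℕ, 1 ≤ K ∧ ∀ t : ℝ, (K : ℝ) ≤ t → t ^ (-δ) < ε := by
  set y : ℝ := ε⁻¹ ^ δ⁻¹ with hy
  have hy0 : 0 ≤ y := Real.rpow_nonneg (inv_nonneg.2 hε.le) _
  refine ⟨⌈y⌉₊ + 1, le_add_self, fun t ht => ?_⟩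
  have hKy : y < (⌈y⌉₊ + 1 : ℕ) := by
    push_cast
    exact lt_of_le_of_lt (Nat.le_ceil y) (by linarith)
  have ht0 : (0:ℝ) < t := lt_of_lt_of_le (by positivity) ht
  have hyt : y < t := lt_of_lt_of_le hKy ht
  have h1 : ε⁻¹ < t ^ δ := by
    calc ε⁻¹ = (ε⁻¹ ^ δ⁻¹) ^ δ := by
          rw [← Real.rpow_mul (inv_nonneg.2 hε.le), inv_mul_cancel₀ hδ.ne', Real.rpow_one]
      _ < t ^ δ := Real.rpow_lt_rpow hy0 hyt hδ
  have htp : 0 < t ^ δ := Real.rpow_pos_of_pos ht0 _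
  rw [Real.rpow_neg ht0.le]
  calc (t ^ δ)⁻¹ < ε⁻¹⁻¹ := by
        exact inv_strictAnti₀ (by positivity) h1
    _ = ε := inv_inv ε

lemma exists_large {S : Set ℕ} (hS : S.Infinite) (K : ℕ) : ∃ x ∈ S, K ≤ x := by
  by_contra h
  push_neg at h
  exact hS (Set.Finite.subset (Set.finite_Iio K) (fun x hx => h x hx))

lemma infinite_of_forall_gt {S : Set ℕ} (h : ∀ N : ℕ, ∃ x ∈ S, N < x) : S.Infinite := by
  by_contra hfin
  rw [Set.not_infinite] at hfin
  obtain ⟨N, hN⟩ := hfin.bddAbove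
  obtain ⟨x, hx, hlt⟩ := h N
  exact absurd (hN hx) (not_le.2 hlt)

lemma irrational_ne_ratio {ζ : ℝ} (h : Irrational ζ) {a b : ℤ} (hb : b ≠ 0) :
    ζ ≠ (a : ℝ) / (b : ℝ) := by
  intro hζ
  refine h ⟨(a : ℚ) / (b : ℚ), ?_⟩
  rw [hζ]; push_cast; ring

end Aux

namespace Aux

lemma irrational_of_Sset {k : ℕ} {ζ : ℝ} {η : ℝ} (hη : 0 < η)
    (h : (Sset k ζ η).Infinite) : Irrational ζ := by
  by_contra hrat
  rw [Irrational] at hrat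
  push_neg at hrat
  obtain ⟨q, hq⟩ := hrat
  set v : ℕ := q.den with hv
  have hv1 : 1 ≤ v := q.pos
  set V : ℕ := v ^ k with hV
  have hV1 : 1 ≤ V := Nat.one_le_pow _ _ hv1
  have hVpos : (0:ℝ) < V := by exact_mod_cast hV1
  have key : ∀ x ∈ Sset k ζ η, (1 : ℝ) / V ≤ (x:ℝ) ^ (-η) := by
    rintro x ⟨hx, hpos, hle⟩
    refine le_trans ?_ hle
    -- find j with positive dist
    have hex : ∃ j ∈ Finset.Icc 1 k, 0 < distNearestInt (ζ ^ j * x) := by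
      by_contra hcon
      push_neg at hcon
      have : maxDist k ζ x ≤ 0 :=
        maxDist_le le_rfl (fun j hj => hcon j hj)
      linarith
    obtain ⟨j, hj, hdj⟩ := hex
    simp only [Finset.mem_Icc] at hj
    -- ζ^j * x * V is an integer
    set t : ℝ := ζ ^ j * x with ht
    have hz : ∃ z : ℤ, t * V = (z : ℝ) := by
      refine ⟨q.num ^ j * x * (v : ℤ) ^ (k - j), ?_⟩
      have hden : (ζ : ℝ) * v = q.num := by
        rw [← hq, Rat.cast_def]
        field_simp [hv]
        rfl
      have hvk : (v:ℝ) ^ (k - j) * (v:ℝ) ^ j = (v:ℝ) ^ k := by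
        rw [← pow_add, Nat.sub_add_cancel hj.2]
      push_cast [ht, hV]
      calc ζ ^ j * x * (v:ℝ) ^ k = (ζ * v) ^ j * x * (v:ℝ) ^ (k - j) := by
            rw [mul_pow, ← hvk]; ring
        _ = (q.num:ℝ) ^ j * x * (v:ℝ) ^ (k - j) := by rw [hden]
    obtain ⟨z, hz⟩ := hz
    have hw : distNearestInt t = |t - round t| := rfl
    have hwz : (t - round t) * V = ((z - round t * V : ℤ) : ℝ) := by
      push_cast
      rw [← hz]; ring
    have hne : (z - round t * (V:ℤ)) ≠ 0 := by
      intro h0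
      rw [h0] at hwz
      have : t - round t = 0 := by
        have := hwz
        simp only [Int.cast_zero] at this
        exact (mul_eq_zero.mp this).resolve_right (by positivity)
      rw [hw, this, abs_zero] at hdj
      exact lt_irrefl _ hdj
    have h1le : (1:ℝ) ≤ |t - round t| * V := by
      have : (1:ℝ) ≤ |((z - round t * V : ℤ) : ℝ)| := by
        rw [← Int.cast_abs]
        exact_mod_cast Int.one_le_abs hne
      calc (1:ℝ) ≤ |((z - round t * V : ℤ) : ℝ)| := this
        _ = |(t - round t) * V| := by rw [hwz]
        _ = |t - round t| * V := by
            rw [abs_mul, abs_of_pos hVpos]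
    have hdV : (1:ℝ) / V ≤ distNearestInt t := by
      rw [hw, div_le_iff₀ hVpos]
      linarith
    exact le_trans hdV (le_maxDist (Finset.mem_Icc.mpr hj))
  -- now Sset is finite: contradiction
  obtain ⟨K, hK1, hK⟩ := rpow_small hη (by positivity : (0:ℝ) < 1 / V)
  obtain ⟨x, hxS, hxK⟩ := exists_large h K
  have := key x hxS
  have := hK x (by exact_mod_cast hxK)
  linarith

end Aux

namespace Aux

lemma fib {ζ : ℝ} (hirr : Irrational ζ) {θ : ℝ} (hθ : 0 < θ) {S : Set ℕ} (hS : S.Infinite)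
    (P : ℕ → ℤ → ℤ → Prop)
    (H : ∀ x ∈ S, ∃ a b : ℤ, P x a b ∧ 0 < b ∧ |(a:ℝ)| ≤ (b:ℝ) * (|ζ| + 1) ∧
      |ζ - (a:ℝ)/(b:ℝ)| ≤ (x:ℝ) ^ (-θ)) (N : ℕ) :
    ∃ x ∈ S, ∃ a b : ℤ, P x a b ∧ 0 < b ∧ (N:ℤ) < b := by
  rcases Nat.eq_zero_or_pos N with rfl | hN
  · obtain ⟨x, hx, -⟩ := exists_large hS 0
    obtain ⟨a, b, hP, hb, -, -⟩ := H x hx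
    exact ⟨x, hx, a, b, hP, hb, by exact_mod_cast hb⟩
  · set A : ℤ := ⌈(N:ℝ) * (|ζ| + 1)⌉ with hA
    have hA0 : 0 ≤ A := Int.ceil_nonneg (by positivity)
    set F : Finset (ℤ × ℤ) := (Finset.Icc 1 (N:ℤ)) ×ˢ (Finset.Icc (-A) A) with hF
    have hFne : F.Nonempty := by
      refine ⟨(1, 0), ?_⟩
      simp only [hF, Finset.mem_product, Finset.mem_Icc]
      refine ⟨⟨le_refl _, by exact_mod_cast hN⟩, by omega, hA0⟩
    set c : ℝ := F.inf' hFne (fun pr => |ζ - (pr.2:ℝ)/(pr.1:ℝ)|) with hc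
    have hcpos : 0 < c := by
      rw [hc, Finset.lt_inf'_iff]
      rintro ⟨b, a⟩ hba
      simp only [hF, Finset.mem_product, Finset.mem_Icc] at hba
      have hb0 : b ≠ 0 := by omega
      exact abs_pos.mpr (sub_ne_zero.mpr (irrational_ne_ratio hirr hb0))
    obtain ⟨K, hK1, hK⟩ := rpow_small hθ hcpos
    obtain ⟨x, hxS, hxK⟩ := exists_large hS K
    obtain ⟨a, b, hP, hb, haA, hab⟩ := H x hxS
    refine ⟨x, hxS, a, b, hP, hb, ?_⟩
    by_contra hcon
    push_neg at hcon
    have hmem : (b, a) ∈ F := by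
      simp only [hF, Finset.mem_product, Finset.mem_Icc]
      refine ⟨⟨hb, hcon⟩, ?_, ?_⟩
      · have : |(a:ℝ)| ≤ (A:ℝ) := by
          refine le_trans haA (le_trans ?_ (Int.le_ceil _))
          have : (b:ℝ) ≤ (N:ℝ) := by exact_mod_cast hcon
          have hz : (0:ℝ) ≤ |ζ| + 1 := by positivity
          nlinarith
        have := (abs_le.mp (by exact_mod_cast this : |a| ≤ A))
        omega
      · have : |(a:ℝ)| ≤ (A:ℝ) := by
          refine le_trans haA (le_trans ?_ (Int.le_ceil _))
          have : (b:ℝ) ≤ (N:ℝ) := by exact_mod_cast hcon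
          have hz : (0:ℝ) ≤ |ζ| + 1 := by positivity
          nlinarith
        have := (abs_le.mp (by exact_mod_cast this : |a| ≤ A))
        omega
    have h1 : c ≤ |ζ - (a:ℝ)/(b:ℝ)| := Finset.inf'_le _ hmem
    have h2 : (x:ℝ) ^ (-θ) < c := hK x (by exact_mod_cast hxK)
    linarith

end Aux

namespace Aux

lemma L1 {n : ℕ} (hn : 1 ≤ n) {ζ : ℝ} {η : ℝ} (hη : 1 < η)
    (h : (Sset n ζ η).Infinite) : (Sset 1 ζ (n * η + n - 1)).Infinite := by
  have hη0 : 0 < η := lt_trans one_pos hη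
  have hirr : Irrational ζ := irrational_of_Sset hη0 h
  set w : ℝ := n * η + n - 1 with hwdef
  have hn1 : (1:ℝ) ≤ (n:ℝ) := by exact_mod_cast hn
  have hw1 : 1 < w := by nlinarith
  have hw0 : 0 < w := lt_trans one_pos hw1
  set C : ℝ := |ζ| + (|ζ| + 1) ^ n + 2 with hC
  have hCpos : 0 < C := by positivity
  obtain ⟨X₀, hX₀1, hX₀⟩ := rpow_small (by linarith : (0:ℝ) < η - 1) (by positivity : (0:ℝ) < 1/C)
  set S' : Set ℕ := Sset n ζ η \ Set.Iio X₀ with hS'def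
  have hS' : S'.Infinite := h.diff (Set.finite_Iio X₀)
  set P : ℕ → ℤ → ℤ → Prop := fun _ a b => |ζ * b - a| ≤ (b:ℝ) ^ (-w) with hP
  have H : ∀ x ∈ S', ∃ a b : ℤ, P x a b ∧ 0 < b ∧ |(a:ℝ)| ≤ (b:ℝ) * (|ζ| + 1) ∧
      |ζ - (a:ℝ)/(b:ℝ)| ≤ (x:ℝ) ^ (-(1+η)) := by
    rintro x ⟨⟨hx0, hmpos, hmle⟩, hxI⟩
    simp only [Set.mem_Iio, not_lt] at hxI
    have hx1 : (1:ℝ) ≤ (x:ℝ) := by exact_mod_cast hx0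
    have hxpos : (0:ℝ) < (x:ℝ) := by linarith
    set e : ℝ := (x:ℝ) ^ (-η) with he
    have he0 : 0 < e := Real.rpow_pos_of_pos hxpos _
    have he1 : e ≤ 1 := Real.rpow_le_one_of_one_le_of_nonpos hx1 (by linarith)
    set p : ℕ → ℤ := fun j => round (ζ ^ j * (x:ℝ)) with hp
    have hd : ∀ j, 1 ≤ j → j ≤ n → |ζ ^ j * (x:ℝ) - p j| ≤ e := by
      intro j h1 h2
      exact le_trans (le_maxDist (Finset.mem_Icc.mpr ⟨h1, h2⟩)) hmle
    -- Step A
    have hrec : ∀ j, 1 ≤ j → j + 1 ≤ n → (x:ℤ) * p (j+1) = p 1 * p j := by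
      intro j h1 h2
      set z : ℤ := p 1 * p j - (x:ℤ) * p (j+1) with hz
      have hzr : (z:ℝ) = (ζ ^ 1 * x - (ζ ^ 1 * x - (p 1 : ℝ))) * (ζ ^ j * x - (ζ ^ j * x - (p j:ℝ)))
          - (x:ℝ) * (ζ ^ (j+1) * x - (ζ ^ (j+1) * x - (p (j+1) : ℝ))) := by
        rw [hz]; push_cast; ring
      have hzr2 : (z:ℝ) = (x:ℝ) * (ζ ^ (j+1) * x - (p (j+1):ℝ))
          - ζ * (x:ℝ) * (ζ ^ j * x - (p j:ℝ)) - ζ ^ j * (x:ℝ) * (ζ ^ 1 * x - (p 1:ℝ))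
          + (ζ ^ 1 * x - (p 1:ℝ)) * (ζ ^ j * x - (p j:ℝ)) := by
        rw [hzr]; ring
      have hb1 : |ζ ^ 1 * x - (p 1:ℝ)| ≤ e := hd 1 le_rfl hn
      have hbj : |ζ ^ j * x - (p j:ℝ)| ≤ e := hd j h1 (by omega)
      have hbj1 : |ζ ^ (j+1) * x - (p (j+1):ℝ)| ≤ e := hd (j+1) (by omega) h2
      have hzeta : |ζ ^ j| ≤ (|ζ| + 1) ^ n := by
        rw [abs_pow]
        calc |ζ| ^ j ≤ (|ζ| + 1) ^ j :=
              pow_le_pow_left₀ (abs_nonneg ζ) (by linarith) j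
          _ ≤ (|ζ| + 1) ^ n := pow_le_pow_right₀ (by linarith [abs_nonneg ζ]) (by omega)
      have hzbound : |(z:ℝ)| ≤ C * ((x:ℝ) * e) := by
        rw [hzr2]
        have h1' : |(x:ℝ) * (ζ ^ (j+1) * x - (p (j+1):ℝ))| ≤ (x:ℝ) * e := by
          rw [abs_mul, abs_of_pos hxpos]
          exact mul_le_mul_of_nonneg_left hbj1 (le_of_lt hxpos)
        have h2' : |ζ * (x:ℝ) * (ζ ^ j * x - (p j:ℝ))| ≤ |ζ| * ((x:ℝ) * e) := by
          rw [abs_mul, abs_mul, abs_of_pos hxpos, mul_assoc]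
          exact mul_le_mul_of_nonneg_left
            (mul_le_mul_of_nonneg_left hbj (le_of_lt hxpos)) (abs_nonneg ζ)
        have h3' : |ζ ^ j * (x:ℝ) * (ζ ^ 1 * x - (p 1:ℝ))| ≤ (|ζ|+1)^n * ((x:ℝ) * e) := by
          rw [abs_mul, abs_mul, abs_of_pos hxpos, mul_assoc]
          refine mul_le_mul hzeta (mul_le_mul_of_nonneg_left hb1 (le_of_lt hxpos))
            (by positivity) (by positivity)
        have h4' : |(ζ ^ 1 * x - (p 1:ℝ)) * (ζ ^ j * x - (p j:ℝ))| ≤ (x:ℝ) * e := by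
          rw [abs_mul]
          calc |ζ ^ 1 * x - (p 1:ℝ)| * |ζ ^ j * x - (p j:ℝ)| ≤ e * e :=
                mul_le_mul hb1 hbj (abs_nonneg _) (le_of_lt he0)
            _ ≤ 1 * e := mul_le_mul_of_nonneg_right he1 (le_of_lt he0)
            _ ≤ (x:ℝ) * e := mul_le_mul_of_nonneg_right (by linarith) (le_of_lt he0)
        have habs := abs_add_le ((x:ℝ) * (ζ ^ (j+1) * x - (p (j+1):ℝ))
            - ζ * (x:ℝ) * (ζ ^ j * x - (p j:ℝ)) - ζ ^ j * (x:ℝ) * (ζ ^ 1 * x - (p 1:ℝ)))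
            ((ζ ^ 1 * x - (p 1:ℝ)) * (ζ ^ j * x - (p j:ℝ)))
        have habs2 := abs_sub ((x:ℝ) * (ζ ^ (j+1) * x - (p (j+1):ℝ))
            - ζ * (x:ℝ) * (ζ ^ j * x - (p j:ℝ))) (ζ ^ j * (x:ℝ) * (ζ ^ 1 * x - (p 1:ℝ)))
        have habs3 := abs_sub ((x:ℝ) * (ζ ^ (j+1) * x - (p (j+1):ℝ)))
            (ζ * (x:ℝ) * (ζ ^ j * x - (p j:ℝ)))
        have hCx : C * ((x:ℝ)*e) = (x:ℝ)*e + |ζ| * ((x:ℝ)*e) + (|ζ|+1)^n * ((x:ℝ)*e) + (x:ℝ)*e := by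
          rw [hC]; ring
        rw [hCx]
        linarith
      have hxe : (x:ℝ) * e = (x:ℝ) ^ (-(η - 1)) := by
        have h' : (x:ℝ) * e = (x:ℝ) ^ (1:ℝ) * (x:ℝ) ^ (-η) := by
          rw [Real.rpow_one, he]
        rw [h', ← Real.rpow_add hxpos]
        congr 1
        ring
      have hsmall : C * ((x:ℝ) * e) < 1 := by
        rw [hxe]
        have := hX₀ (x:ℝ) (by exact_mod_cast hxI)
        calc C * (x:ℝ) ^ (-(η-1)) < C * (1/C) := by
              exact mul_lt_mul_of_pos_left this hCpos
          _ = 1 := by field_simp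
      have : |z| < 1 := by
        have : ((|z| : ℤ) : ℝ) < 1 := by rw [Int.cast_abs]; linarith
        exact_mod_cast this
      have hz0 : z = 0 := Int.abs_lt_one_iff.mp this
      rw [hz] at hz0; omega
    -- Step B
    have hpow : ∀ j, 1 ≤ j → j ≤ n → (x:ℤ) ^ (j-1) * p j = (p 1) ^ j := by
      intro j h1
      induction j, h1 using Nat.le_induction with
      | base => intro _; simp
      | succ j hj ih =>
        intro hjn
        have hih := ih (by omega)
        have hr := hrec j hj hjn
        have hj1 : j + 1 - 1 = j := by omega
        have hjm : j = (j - 1) + 1 := by omega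
        calc (x:ℤ) ^ (j+1-1) * p (j+1) = (x:ℤ) ^ (j-1) * ((x:ℤ) * p (j+1)) := by
              rw [hj1]; rw (occs := .pos [1]) [hjm]; ring
          _ = (x:ℤ) ^ (j-1) * (p 1 * p j) := by rw [hr]
          _ = p 1 * ((x:ℤ)^(j-1) * p j) := by ring
          _ = p 1 * (p 1)^j := by rw [hih]
          _ = (p 1) ^ (j+1) := by ring
    -- Step C : gcd
    set d : ℕ := Int.gcd (p 1) (x:ℤ) with hdg
    have hxz0 : (x:ℤ) ≠ 0 := by exact_mod_cast hx0.ne'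
    have hd0 : 0 < d := Nat.pos_of_ne_zero (fun h0 => hxz0 (Int.gcd_eq_zero_iff.mp h0).2)
    have hdz : (0:ℤ) < (d:ℤ) := by exact_mod_cast hd0
    set a : ℤ := p 1 / (d:ℤ) with ha
    set b : ℤ := (x:ℤ) / (d:ℤ) with hb
    have hdvd1 : (d:ℤ) ∣ p 1 := Int.gcd_dvd_left _ _
    have hdvd2 : (d:ℤ) ∣ (x:ℤ) := Int.gcd_dvd_right _ _
    have hxdb : (x:ℤ) = (d:ℤ) * b := (Int.mul_ediv_cancel' hdvd2).symm
    have hp1da : p 1 = (d:ℤ) * a := (Int.mul_ediv_cancel' hdvd1).symm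
    have hb0 : 0 < b := by
      by_contra hcon
      push_neg at hcon
      have : (d:ℤ) * b ≤ 0 := mul_nonpos_of_nonneg_of_nonpos (le_of_lt hdz) hcon
      rw [← hxdb] at this
      omega
    have hcop : IsCoprime a b := by
      rw [Int.isCoprime_iff_gcd_eq_one, ha, hb]
      exact Int.gcd_div_gcd_div_gcd (by exact_mod_cast hd0)
    -- b^(n-1) ∣ d
    have hkey := hpow n hn le_rfl
    have hcancel : b ^ (n-1) * p n = (d:ℤ) * a ^ n := by
      have hdn : ((d:ℤ)) ^ (n-1) ≠ 0 := pow_ne_zero _ (by omega)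
      apply mul_left_cancel₀ hdn
      have hn' : n = (n-1) + 1 := by omega
      calc (d:ℤ)^(n-1) * (b^(n-1) * p n) = ((d:ℤ)*b)^(n-1) * p n := by ring
        _ = (x:ℤ)^(n-1) * p n := by rw [← hxdb]
        _ = (p 1)^n := hkey
        _ = ((d:ℤ)*a)^n := by rw [← hp1da]
        _ = (d:ℤ)^(n-1) * ((d:ℤ) * a^n) := by
            obtain ⟨k, hk⟩ : ∃ k, n = k + 1 := ⟨n-1, by omega⟩
            subst hk
            simp only [Nat.add_sub_cancel, mul_pow, pow_succ]
            ring
    have hdvd3 : b ^ (n-1) ∣ (d:ℤ) := by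
      have hdvd : b ^ (n-1) ∣ (d:ℤ) * a ^ n := ⟨p n, hcancel.symm⟩
      exact (IsCoprime.pow (hcop.symm)).dvd_of_dvd_mul_right hdvd
    have hble : b ^ (n-1) ≤ (d:ℤ) := Int.le_of_dvd hdz hdvd3
    have hbnx : b ^ n ≤ (x:ℤ) := by
      have hn' : n = (n-1) + 1 := by omega
      calc b ^ n = b ^ (n-1) * b := by
            obtain ⟨k, hk⟩ : ∃ k, n = k + 1 := ⟨n-1, by omega⟩
            subst hk
            simp only [Nat.add_sub_cancel, pow_succ]
        _ ≤ (d:ℤ) * b := mul_le_mul_of_nonneg_right hble (le_of_lt hb0)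
        _ = (x:ℤ) := hxdb.symm
    -- Step D: real estimates
    have hbr : (1:ℝ) ≤ (b:ℝ) := by exact_mod_cast hb0
    have hdr : (1:ℝ) ≤ (d:ℝ) := by exact_mod_cast hd0
    have hdrpos : (0:ℝ) < (d:ℝ) := by linarith
    have hbrpos : (0:ℝ) < (b:ℝ) := by linarith
    have he1' : |ζ * x - (p 1:ℝ)| ≤ e := by
      have := hd 1 le_rfl hn
      rwa [pow_one] at this
    have hxr : (x:ℝ) = (d:ℝ) * (b:ℝ) := by exact_mod_cast hxdb
    have hpr : (p 1 : ℝ) = (d:ℝ) * (a:ℝ) := by exact_mod_cast hp1da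
    have hident : ζ * (b:ℝ) - (a:ℝ) = (ζ * x - (p 1:ℝ)) / (d:ℝ) := by
      rw [hxr, hpr]
      field_simp
    have hident2 : ζ - (a:ℝ)/(b:ℝ) = (ζ * x - (p 1:ℝ)) / (x:ℝ) := by
      rw [hxr, hpr]
      field_simp
    have habs1 : |ζ * (b:ℝ) - (a:ℝ)| ≤ e / (d:ℝ) := by
      rw [hident, abs_div, abs_of_pos hdrpos]
      gcongr
    -- conclude H
    have hbnxR : ((b:ℝ))^n ≤ (x:ℝ) := by exact_mod_cast hbnx
    have he_le : e ≤ (b:ℝ) ^ (-((n:ℝ) * η)) := by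
      have h1 : e ≤ ((b:ℝ)^n) ^ (-η) :=
        Real.rpow_le_rpow_of_nonpos (by positivity) hbnxR (by linarith)
      have h2 : ((b:ℝ)^n) ^ (-η) = (b:ℝ) ^ (-((n:ℝ) * η)) := by
        rw [← Real.rpow_natCast (b:ℝ) n, ← Real.rpow_mul hbrpos.le]
        congr 1
        ring
      linarith [h2 ▸ h1]
    have hdge : ((b:ℝ))^(n-1) ≤ (d:ℝ) := by exact_mod_cast hble
    have hrw : (b:ℝ) ^ (-((n:ℝ) * η)) / (b:ℝ)^(n-1) = (b:ℝ) ^ (-w) := by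
      rw [div_eq_mul_inv, ← Real.rpow_natCast (b:ℝ) (n-1), ← Real.rpow_neg hbrpos.le,
        ← Real.rpow_add hbrpos]
      congr 1
      push_cast [Nat.cast_sub hn]
      rw [hwdef]
      ring
    have hP1 : |ζ * (b:ℝ) - (a:ℝ)| ≤ (b:ℝ) ^ (-w) := by
      refine le_trans habs1 ?_
      rw [← hrw]
      exact div_le_div₀ (Real.rpow_nonneg hbrpos.le _) he_le (by positivity) hdge
    have hedb : e / (d:ℝ) ≤ 1 := by
      rw [div_le_one hdrpos]
      linarith
    have haB : |(a:ℝ)| ≤ (b:ℝ) * (|ζ| + 1) := by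
      have h' : (a:ℝ) = ζ * (b:ℝ) - (ζ * (b:ℝ) - (a:ℝ)) := by ring
      have h'' : |(a:ℝ)| ≤ |ζ * (b:ℝ)| + |ζ * (b:ℝ) - (a:ℝ)| := by
        rw (occs := .pos [1]) [h']
        exact abs_sub _ _
      have h3 : |ζ * (b:ℝ)| = |ζ| * (b:ℝ) := by
        rw [abs_mul, abs_of_pos hbrpos]
      have h4 : (b:ℝ) * (|ζ| + 1) = |ζ| * (b:ℝ) + (b:ℝ) := by ring
      linarith [le_trans habs1 hedb, h'', h3 ▸ h'', hbr]
    have hfar : |ζ - (a:ℝ)/(b:ℝ)| ≤ (x:ℝ) ^ (-(1+η)) := by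
      rw [hident2, abs_div, abs_of_pos hxpos]
      have h1 : |ζ * ↑x - (p 1:ℝ)| / (x:ℝ) ≤ e / (x:ℝ) := by gcongr
      refine le_trans h1 ?_
      rw [he, div_eq_mul_inv, ← Real.rpow_neg_one (x:ℝ), ← Real.rpow_add hxpos]
      apply le_of_eq
      congr 1
      ring
    exact ⟨a, b, hP1, hb0, haB, hfar⟩
  -- final assembly
  apply infinite_of_forall_gt
  intro N
  obtain ⟨x, hxS', a, b, hPx, hb0, hNb⟩ :=
    fib hirr (show (0:ℝ) < 1 + η by linarith) hS' P H N
  have hbt : ((b.toNat : ℕ) : ℝ) = (b:ℝ) := by exact_mod_cast Int.toNat_of_nonneg hb0.le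
  refine ⟨b.toNat, ⟨by omega, ?_, ?_⟩, by omega⟩
  · exact maxDist_pos le_rfl hirr (by omega)
  · refine maxDist_le (Real.rpow_nonneg (by positivity) _) ?_
    intro j hj
    simp only [Finset.mem_Icc] at hj
    have hj1 : j = 1 := by omega
    subst hj1
    have heq : ζ ^ 1 * ((b.toNat : ℕ):ℝ) = ζ * (b:ℝ) := by rw [pow_one, hbt]
    rw [heq, hbt]
    exact le_trans (distNearestInt_le _ a) hPx

end Aux

namespace Aux

lemma pow_diff_bound {u t M : ℝ} (hu : |u| ≤ M) (ht : |t| ≤ M) (hM : 1 ≤ M) :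
    ∀ j : ℕ, |u ^ j - t ^ j| ≤ j * M ^ j * |u - t| := by
  intro j
  induction j with
  | zero => simp
  | succ j ih =>
    have hM0 : 0 ≤ M := by linarith
    have key : u ^ (j+1) - t ^ (j+1) = u * (u ^ j - t ^ j) + t ^ j * (u - t) := by ring
    calc |u ^ (j+1) - t ^ (j+1)| ≤ |u * (u ^ j - t ^ j)| + |t ^ j * (u - t)| := by
          rw [key]; exact abs_add_le _ _
      _ = |u| * |u ^ j - t ^ j| + |t| ^ j * |u - t| := by rw [abs_mul, abs_mul, abs_pow]
      _ ≤ M * (j * M ^ j * |u - t|) + M ^ j * |u - t| := by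
          have h1 : |u| * |u ^ j - t ^ j| ≤ M * (j * M ^ j * |u - t|) :=
            mul_le_mul hu ih (abs_nonneg _) hM0
          have h2 : |t| ^ j * |u - t| ≤ M ^ j * |u - t| :=
            mul_le_mul_of_nonneg_right (pow_le_pow_left₀ (abs_nonneg t) ht j) (abs_nonneg _)
          linarith
      _ ≤ (j+1 : ℕ) * M ^ (j+1) * |u - t| := by
          have hMj : M ^ j ≤ M ^ (j+1) := pow_le_pow_right₀ hM (by omega)
          have habs : 0 ≤ |u - t| := abs_nonneg _
          have h5 : M ^ j * |u - t| ≤ M ^ (j+1) * |u - t| :=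
            mul_le_mul_of_nonneg_right hMj habs
          have h6 : M * ((j:ℝ) * M ^ j * |u - t|) = (j:ℝ) * M ^ (j+1) * |u - t| := by ring
          have h7 : ((j:ℕ)+1 : ℕ) * M ^ (j+1) * |u - t|
              = (j:ℝ) * M ^ (j+1) * |u - t| + M ^ (j+1) * |u - t| := by push_cast; ring
          rw [h7]
          linarith

lemma L2 {m : ℕ} (hm : 1 ≤ m) {ζ : ℝ} {w η : ℝ} (hw : 0 < w)
    (hη : (m:ℝ) * η < w + 1 - m)
    (h : (Sset 1 ζ w).Infinite) : (Sset m ζ η).Infinite := by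
  have hirr : Irrational ζ := irrational_of_Sset hw h
  set M : ℝ := |ζ| + 1 with hM
  have hM1 : 1 ≤ M := by have := abs_nonneg ζ; rw [hM]; linarith
  have hM0 : 0 < M := by linarith
  set C : ℝ := m * M ^ m with hC
  have hm1 : (1:ℝ) ≤ (m:ℝ) := by exact_mod_cast hm
  have hCpos : 0 < C := by
    rw [hC]; positivity
  set δ : ℝ := w + 1 - m - m * η with hδ
  have hδ0 : 0 < δ := by rw [hδ]; linarith
  obtain ⟨K, hK1, hK⟩ := rpow_small hδ0 (by positivity : (0:ℝ) < 1/C)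
  set P : ℕ → ℤ → ℤ → Prop := fun _ a b => |ζ - (a:ℝ)/(b:ℝ)| ≤ (b:ℝ) ^ (-(1+w)) with hP
  have H : ∀ q ∈ Sset 1 ζ w, ∃ a b : ℤ, P q a b ∧ 0 < b ∧ |(a:ℝ)| ≤ (b:ℝ) * (|ζ| + 1) ∧
      |ζ - (a:ℝ)/(b:ℝ)| ≤ (q:ℝ) ^ (-(1+w)) := by
    rintro q ⟨hq0, hqpos, hqle⟩
    have hq1 : (1:ℝ) ≤ (q:ℝ) := by exact_mod_cast hq0
    have hqr : (0:ℝ) < (q:ℝ) := by linarith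
    set p : ℤ := round (ζ ^ 1 * (q:ℝ)) with hp
    have hdist : |ζ ^ 1 * (q:ℝ) - p| ≤ (q:ℝ) ^ (-w) :=
      le_trans (le_maxDist (Finset.mem_Icc.mpr ⟨le_rfl, le_rfl⟩)) hqle
    rw [pow_one] at hdist
    set g : ℕ := Int.gcd p (q:ℤ) with hg
    have hqz0 : (q:ℤ) ≠ 0 := by exact_mod_cast hq0.ne'
    have hg0 : 0 < g := Nat.pos_of_ne_zero (fun h0 => hqz0 (Int.gcd_eq_zero_iff.mp h0).2)
    have hgz : (0:ℤ) < (g:ℤ) := by exact_mod_cast hg0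
    set a : ℤ := p / (g:ℤ) with ha
    set b : ℤ := (q:ℤ) / (g:ℤ) with hb
    have hdvd1 : (g:ℤ) ∣ p := Int.gcd_dvd_left _ _
    have hdvd2 : (g:ℤ) ∣ (q:ℤ) := Int.gcd_dvd_right _ _
    have hqgb : (q:ℤ) = (g:ℤ) * b := (Int.mul_ediv_cancel' hdvd2).symm
    have hpga : p = (g:ℤ) * a := (Int.mul_ediv_cancel' hdvd1).symm
    have hb0 : 0 < b := by
      by_contra hcon
      push_neg at hcon
      have : (g:ℤ) * b ≤ 0 := mul_nonpos_of_nonneg_of_nonpos (le_of_lt hgz) hcon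
      rw [← hqgb] at this
      omega
    have hbq : b ≤ (q:ℤ) := by nlinarith
    have hbr : (1:ℝ) ≤ (b:ℝ) := by exact_mod_cast hb0
    have hbrpos : (0:ℝ) < (b:ℝ) := by linarith
    have hbqr : (b:ℝ) ≤ (q:ℝ) := by exact_mod_cast hbq
    have hqrr : (q:ℝ) = (g:ℝ) * (b:ℝ) := by exact_mod_cast hqgb
    have hprr : (p:ℝ) = (g:ℝ) * (a:ℝ) := by exact_mod_cast hpga
    have hgr1 : (1:ℝ) ≤ (g:ℝ) := by exact_mod_cast hg0
    have hident : ζ - (a:ℝ)/(b:ℝ) = (ζ * q - (p:ℝ)) / (q:ℝ) := by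
      rw [hqrr, hprr]
      field_simp
    have hfar : |ζ - (a:ℝ)/(b:ℝ)| ≤ (q:ℝ) ^ (-(1+w)) := by
      rw [hident, abs_div, abs_of_pos hqr]
      have h1 : |ζ * ↑q - (p:ℝ)| / (q:ℝ) ≤ (q:ℝ) ^ (-w) / (q:ℝ) := by gcongr
      refine le_trans h1 ?_
      rw [div_eq_mul_inv, ← Real.rpow_neg_one (q:ℝ), ← Real.rpow_add hqr]
      apply le_of_eq
      congr 1
      ring
    have hPq : |ζ - (a:ℝ)/(b:ℝ)| ≤ (b:ℝ) ^ (-(1+w)) := by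
      refine le_trans hfar ?_
      exact Real.rpow_le_rpow_of_nonpos hbrpos hbqr (by linarith)
    have hq_le1 : (q:ℝ) ^ (-w) ≤ 1 :=
      Real.rpow_le_one_of_one_le_of_nonpos hq1 (by linarith)
    have habs1 : |ζ * (b:ℝ) - (a:ℝ)| ≤ (q:ℝ) ^ (-w) := by
      have hid2 : ζ * (b:ℝ) - (a:ℝ) = (ζ * q - (p:ℝ)) / (g:ℝ) := by
        rw [hqrr, hprr]
        field_simp
      rw [hid2, abs_div, abs_of_pos (by linarith : (0:ℝ) < (g:ℝ))]
      calc |ζ * ↑q - (p:ℝ)| / (g:ℝ) ≤ |ζ * ↑q - (p:ℝ)| / 1 := by gcongr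
        _ = |ζ * ↑q - (p:ℝ)| := by rw [div_one]
        _ ≤ (q:ℝ) ^ (-w) := hdist
    have haB : |(a:ℝ)| ≤ (b:ℝ) * (|ζ| + 1) := by
      have h' : (a:ℝ) = ζ * (b:ℝ) - (ζ * (b:ℝ) - (a:ℝ)) := by ring
      have h'' : |(a:ℝ)| ≤ |ζ * (b:ℝ)| + |ζ * (b:ℝ) - (a:ℝ)| := by
        rw (occs := .pos [1]) [h']
        exact abs_sub _ _
      have h3 : |ζ * (b:ℝ)| = |ζ| * (b:ℝ) := by rw [abs_mul, abs_of_pos hbrpos]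
      have h4 : (b:ℝ) * (|ζ| + 1) = |ζ| * (b:ℝ) + (b:ℝ) := by ring
      linarith [le_trans habs1 hq_le1, h3 ▸ h'']
    exact ⟨a, b, hPq, hb0, haB, hfar⟩
  -- conclusion
  apply infinite_of_forall_gt
  intro N₁
  obtain ⟨q, hqS, a, b, hPx, hb0, hNb⟩ :=
    fib hirr (show (0:ℝ) < 1 + w by linarith) h P H (max N₁ K)
  set bn : ℕ := b.toNat with hbn
  have hbnb : ((bn : ℕ) : ℝ) = (b:ℝ) := by exact_mod_cast Int.toNat_of_nonneg hb0.le
  have hbnN : N₁ < bn := by omega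
  have hbnK : K ≤ bn := by omega
  have hbn1 : 1 ≤ bn := by omega
  set B : ℝ := (bn : ℝ) with hB
  have hB1 : (1:ℝ) ≤ B := by rw [hB]; exact_mod_cast hbn1
  have hB0 : (0:ℝ) < B := by linarith
  have hKB : (K:ℝ) ≤ B := by rw [hB]; exact_mod_cast hbnK
  have hCB : C < B ^ δ := by
    have h0 := hK B hKB
    have hBδ : 0 < B ^ δ := Real.rpow_pos_of_pos hB0 _
    rw [Real.rpow_neg hB0.le] at h0
    have h1 : C * (B ^ δ)⁻¹ < 1 := by
      have h2 := mul_lt_mul_of_pos_left h0 hCpos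
      rwa [mul_one_div, div_self hCpos.ne'] at h2
    calc C = C * (B ^ δ)⁻¹ * B ^ δ := by field_simp
      _ < 1 * B ^ δ := mul_lt_mul_of_pos_right h1 hBδ
      _ = B ^ δ := one_mul _
  set x : ℕ := bn ^ m with hx
  have hx0 : 0 < x := by
    have : 1 ≤ bn ^ m := Nat.one_le_pow _ _ hbn1
    omega
  have hxR : ((x : ℕ) : ℝ) = B ^ m := by rw [hx]; push_cast; rfl
  have hPx' : |ζ - (a:ℝ)/B| ≤ B ^ (-(1+w)) := by
    rw [hbnb]; exact hPx
  have hBm0 : (0:ℝ) < B ^ m := by positivity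
  refine ⟨x, ⟨hx0, maxDist_pos hm hirr hx0, ?_⟩, ?_⟩
  · refine maxDist_le (Real.rpow_nonneg (by positivity) _) ?_
    intro j hj
    simp only [Finset.mem_Icc] at hj
    obtain ⟨hj1, hjm⟩ := hj
    set z : ℤ := a ^ j * (bn:ℤ) ^ (m-j) with hz
    have hBmj : B ^ (m-j) * B ^ j = B ^ m := by
      rw [← pow_add]; congr 1; omega
    have hzr : (z:ℝ) = B ^ m * ((a:ℝ)/B) ^ j := by
      rw [hz]
      push_cast
      rw [div_pow, ← hBmj]
      field_simp
      ring
    have hidj : ζ ^ j * ((x:ℕ):ℝ) - (z:ℝ) = B ^ m * (ζ ^ j - ((a:ℝ)/B) ^ j) := by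
      rw [hxR, hzr]; ring
    have hζM : |ζ| ≤ M := by rw [hM]; linarith
    have habM : |(a:ℝ)/B| ≤ M := by
      have h1 : |ζ - (a:ℝ)/B| ≤ 1 := by
        refine le_trans hPx' (Real.rpow_le_one_of_one_le_of_nonpos hB1 (by linarith))
      have h2 : (a:ℝ)/B = ζ - (ζ - (a:ℝ)/B) := by ring
      calc |(a:ℝ)/B| = |ζ - (ζ - (a:ℝ)/B)| := by rw [← h2]
        _ ≤ |ζ| + |ζ - (a:ℝ)/B| := abs_sub _ _
        _ ≤ M := by rw [hM]; linarith
    have hdiff := pow_diff_bound hζM habM hM1 j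
    have hjC : (j:ℝ) * M ^ j ≤ C := by
      rw [hC]
      have hjm' : (j:ℝ) ≤ (m:ℝ) := by exact_mod_cast hjm
      have h9 : M ^ j ≤ M ^ m := pow_le_pow_right₀ hM1 hjm
      exact mul_le_mul hjm' h9 (by positivity) (by positivity)
    calc distNearestInt (ζ ^ j * ((x:ℕ):ℝ)) ≤ |ζ ^ j * ((x:ℕ):ℝ) - (z:ℝ)| :=
          distNearestInt_le _ z
      _ = B ^ m * |ζ ^ j - ((a:ℝ)/B) ^ j| := by
          rw [hidj, abs_mul, abs_of_pos hBm0]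
      _ ≤ B ^ m * (C * |ζ - (a:ℝ)/B|) := by
          refine mul_le_mul_of_nonneg_left ?_ (le_of_lt hBm0)
          refine le_trans hdiff ?_
          exact mul_le_mul_of_nonneg_right hjC (abs_nonneg _)
      _ ≤ B ^ m * (C * B ^ (-(1+w))) := by
          refine mul_le_mul_of_nonneg_left ?_ (le_of_lt hBm0)
          exact mul_le_mul_of_nonneg_left hPx' (le_of_lt hCpos)
      _ ≤ ((x:ℕ):ℝ) ^ (-η) := by
          have e1 : B ^ m * (C * B ^ (-(1+w))) = C * (B ^ ((m:ℝ)) * B ^ (-(1+w))) := by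
            rw [← Real.rpow_natCast B m]; ring
          have e2 : B ^ ((m:ℝ)) * B ^ (-(1+w)) = B ^ ((m:ℝ) - (1+w)) := by
            rw [← Real.rpow_add hB0, show (m:ℝ) + -(1+w) = (m:ℝ) - (1+w) by ring]
          have e3 : ((x:ℕ):ℝ) ^ (-η) = B ^ (-((m:ℝ) * η)) := by
            rw [hxR, ← Real.rpow_natCast B m, ← Real.rpow_mul hB0.le]
            congr 1
            ring
          rw [e1, e2, e3]
          calc C * B ^ ((m:ℝ) - (1+w)) ≤ B ^ δ * B ^ ((m:ℝ) - (1+w)) := by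
                exact mul_le_mul_of_nonneg_right (le_of_lt hCB)
                  (Real.rpow_nonneg hB0.le _)
            _ = B ^ (δ + ((m:ℝ) - (1+w))) := by rw [← Real.rpow_add hB0]
            _ = B ^ (-((m:ℝ) * η)) := by
                congr 1
                rw [hδ]
                ring
  · have : bn ≤ bn ^ m := Nat.le_self_pow (by omega) bn
    omega

end Aux

namespace Aux

noncomputable def lambdaConst' (k : ℕ) (ζ : ℝ) : EReal :=
  sSup (insert (0 : EReal) {e : EReal | ∃ η : ℝ, e = (η : EReal) ∧ (Sset k ζ η).Infinite})

lemma le_lambda {k : ℕ} {ζ η : ℝ} (h : (Sset k ζ η).Infinite) :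
    (η : EReal) ≤ lambdaConst' k ζ :=
  le_sSup (Set.mem_insert_of_mem _ ⟨η, rfl, h⟩)

lemma lambda_nonneg (k : ℕ) (ζ : ℝ) : 0 ≤ lambdaConst' k ζ :=
  le_sSup (Set.mem_insert _ _)

lemma Sset_of_lt {k : ℕ} {ζ : ℝ} {r : ℝ} (hr : 0 ≤ r)
    (h : (r : EReal) < lambdaConst' k ζ) : (Sset k ζ r).Infinite := by
  obtain ⟨e, he, hlt⟩ := lt_sSup_iff.mp h
  rcases Set.mem_insert_iff.mp he with rfl | ⟨η, rfl, hinf⟩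
  · exact absurd hlt (not_lt.mpr (by exact_mod_cast hr))
  · have hrη : r < η := by exact_mod_cast hlt
    refine hinf.mono ?_
    rintro x ⟨hx0, hxp, hxle⟩
    refine ⟨hx0, hxp, le_trans hxle ?_⟩
    exact Real.rpow_le_rpow_of_exponent_le (by exact_mod_cast hx0) (by linarith)

lemma coe_le_of_forall_lt {c : ℝ} {B : EReal} (h : ∀ η : ℝ, η < c → (η : EReal) ≤ B) :
    (c : EReal) ≤ B := by
  by_contra hc
  push_neg at hc
  obtain ⟨s, hs1, hs2⟩ := EReal.exists_between_coe_real hc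
  have := h s (by exact_mod_cast hs2)
  exact absurd (lt_of_le_of_lt this hs1) (lt_irrefl _)

lemma real_le_of_forall_lt {c α : ℝ} (h : ∀ η : ℝ, η < c → η ≤ α) : c ≤ α := by
  by_contra hc
  push_neg at hc
  have := h ((α + c)/2) (by linarith)
  linarith

end Aux

theorem stmt6 (n m : ℕ) (hn : 1 ≤ n) (hnm : n ≤ m) (ζ : ℝ) :
    (1 < lambdaConst n ζ →
      (((n : ℝ) : EReal) * lambdaConst n ζ + ((n : ℝ) : EReal) - ((m : ℝ) : EReal)) /
        ((m : ℝ) : EReal) ≤ lambdaConst m ζ) ∧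
    (1 < lambdaConst n ζ → 1 < lambdaConst m ζ →
      lambdaConst m ζ =
        (((n : ℝ) : EReal) * lambdaConst n ζ + ((n : ℝ) : EReal) - ((m : ℝ) : EReal)) /
          ((m : ℝ) : EReal)) := by
  have hm : 1 ≤ m := le_trans hn hnm
  have hleq : ∀ k, lambdaConst k ζ = Aux.lambdaConst' k ζ := fun k => rfl
  have hnR : (1:ℝ) ≤ (n:ℝ) := by exact_mod_cast hn
  have hmR : (1:ℝ) ≤ (m:ℝ) := by exact_mod_cast hm
  have hn0 : (0:ℝ) < (n:ℝ) := by linarith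
  have hm0 : (0:ℝ) < (m:ℝ) := by linarith
  have hnmR : (n:ℝ) ≤ (m:ℝ) := by exact_mod_cast hnm
  have hEtop : (((n : ℝ) : EReal) * (⊤:EReal) + ((n : ℝ) : EReal) - ((m : ℝ) : EReal)) /
      ((m : ℝ) : EReal) = ⊤ := by
    rw [EReal.mul_top_of_pos (by exact_mod_cast hn0), EReal.top_add_coe, EReal.top_sub_coe]
    exact EReal.top_div_of_pos_ne_top (by exact_mod_cast hm0) (EReal.coe_ne_top _)
  have lower : 1 < lambdaConst n ζ →
      (((n : ℝ) : EReal) * lambdaConst n ζ + ((n : ℝ) : EReal) - ((m : ℝ) : EReal)) /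
        ((m : ℝ) : EReal) ≤ lambdaConst m ζ := by
    intro hA
    by_cases htop : lambdaConst n ζ = ⊤
    · rw [htop, hEtop, top_le_iff, hleq, EReal.eq_top_iff_forall_lt]
      intro R
      set r : ℝ := max (((m:ℝ) * (R + 2) - n + m)/n) 2 with hrdef
      have hr2 : 2 ≤ r := le_max_right _ _
      have hr1 : 1 < r := by linarith
      have hSr : (Aux.Sset n ζ r).Infinite := by
        refine Aux.Sset_of_lt (by linarith) ?_
        rw [← hleq, htop]
        exact EReal.coe_lt_top r
      have h1 := Aux.L1 hn hr1 hSr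
      have hw0 : (0:ℝ) < (n:ℝ)*r + (n:ℝ) - 1 := by nlinarith
      set η : ℝ := (((n:ℝ)*r + (n:ℝ) - 1) + 1 - m)/m - 1 with hηdef
      have hη : (m:ℝ) * η < ((n:ℝ)*r + (n:ℝ) - 1) + 1 - m := by
        rw [hηdef]
        field_simp
        linarith
      have h2 := Aux.L2 hm hw0 hη h1
      have h3 := Aux.le_lambda h2
      refine lt_of_lt_of_le ?_ h3
      have hRη : R < η := by
        have hrge : ((m:ℝ) * (R + 2) - n + m)/n ≤ r := le_max_left _ _
        rw [div_le_iff₀ hn0] at hrge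
        rw [hηdef]
        rw [lt_sub_iff_add_lt, lt_div_iff₀ hm0]
        nlinarith
      exact_mod_cast hRη
    · have hαe : lambdaConst n ζ = ((lambdaConst n ζ).toReal : EReal) :=
        (EReal.coe_toReal htop hA.ne_bot).symm
      set α : ℝ := (lambdaConst n ζ).toReal with hαdef
      have hα1 : 1 < α := by
        rw [hαe] at hA
        exact_mod_cast hA
      have hEc : (((n : ℝ) : EReal) * lambdaConst n ζ + ((n : ℝ) : EReal) - ((m : ℝ) : EReal)) /
          ((m : ℝ) : EReal) = ((((n:ℝ)*α + n - m)/m : ℝ) : EReal) := by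
        rw [hαe, ← EReal.coe_mul, ← EReal.coe_add, ← EReal.coe_sub, ← EReal.coe_div]
      rw [hEc, hleq]
      apply Aux.coe_le_of_forall_lt
      intro η hη
      have hc0 : 0 < (n:ℝ)*α + n - m - m*η := by
        rw [lt_div_iff₀ hm0] at hη
        linarith
      set ε : ℝ := min (((n:ℝ)*α + n - m - m*η)/(2*n)) ((α-1)/2) with hεdef
      have hε0 : 0 < ε := lt_min (by positivity) (by linarith)
      set r : ℝ := α - ε with hrdef
      have hr1 : 1 < r := by
        have := min_le_right (((n:ℝ)*α + n - m - m*η)/(2*n)) ((α-1)/2)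
        rw [hrdef]
        linarith
      have hrα : r < α := by rw [hrdef]; linarith
      have hSr : (Aux.Sset n ζ r).Infinite := by
        refine Aux.Sset_of_lt (by linarith) ?_
        rw [← hleq, hαe]
        exact_mod_cast hrα
      have h1 := Aux.L1 hn hr1 hSr
      have hw0 : (0:ℝ) < (n:ℝ)*r + (n:ℝ) - 1 := by nlinarith
      have hη2 : (m:ℝ) * η < ((n:ℝ)*r + (n:ℝ) - 1) + 1 - m := by
        have hεle : ε ≤ ((n:ℝ)*α + n - m - m*η)/(2*n) :=
          min_le_left _ _
        rw [le_div_iff₀ (by positivity : (0:ℝ) < 2*n)] at hεle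
        rw [hrdef]
        nlinarith
      have h2 := Aux.L2 hm hw0 hη2 h1
      exact Aux.le_lambda h2
  refine ⟨lower, ?_⟩
  intro hA hB
  refine le_antisymm ?_ (lower hA)
  by_cases htop : lambdaConst n ζ = ⊤
  · rw [htop, hEtop]
    exact le_top
  · have hαe : lambdaConst n ζ = ((lambdaConst n ζ).toReal : EReal) :=
      (EReal.coe_toReal htop hA.ne_bot).symm
    set α : ℝ := (lambdaConst n ζ).toReal with hαdef
    have hα1 : 1 < α := by
      rw [hαe] at hA
      exact_mod_cast hA
    have hEc : (((n : ℝ) : EReal) * lambdaConst n ζ + ((n : ℝ) : EReal) - ((m : ℝ) : EReal)) /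
        ((m : ℝ) : EReal) = ((((n:ℝ)*α + n - m)/m : ℝ) : EReal) := by
      rw [hαe, ← EReal.coe_mul, ← EReal.coe_add, ← EReal.coe_sub, ← EReal.coe_div]
    rw [hEc, hleq]
    set c : ℝ := ((n:ℝ)*α + n - m)/m with hcdef
    -- upper bound on λ₁
    have hL : Aux.lambdaConst' 1 ζ ≤ (((n:ℝ)*α + n - 1 : ℝ) : EReal) := by
      apply sSup_le
      rintro e he
      rcases Set.mem_insert_iff.mp he with rfl | ⟨w, rfl, hinf⟩
      · exact_mod_cast (by nlinarith : (0:ℝ) ≤ (n:ℝ)*α + n - 1)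
      · rw [EReal.coe_le_coe_iff]
        by_cases hw1 : w ≤ 1
        · nlinarith
        · push_neg at hw1
          have hw0 : (0:ℝ) < w := by linarith
          have key : (w + 1 - n)/n ≤ α := by
            apply Aux.real_le_of_forall_lt
            intro η hηn
            have hηn' : (n:ℝ)*η < w + 1 - n := by
              rw [lt_div_iff₀ hn0] at hηn
              linarith
            have h2 := Aux.L2 hn hw0 hηn' hinf
            have h3 := Aux.le_lambda h2
            rw [← hleq, hαe] at h3
            exact_mod_cast h3
          rw [div_le_iff₀ hn0] at key
          nlinarith
    by_contra hcon
    push_neg at hcon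
    have hmax : ((max c 1 : ℝ) : EReal) < Aux.lambdaConst' m ζ := by
      rcases max_choice c 1 with hmc | hmc <;> rw [hmc]
      · exact hcon
      · rw [EReal.coe_one, ← hleq]
        exact hB
    obtain ⟨s, hs1, hs2⟩ := EReal.exists_between_coe_real hmax
    have hs1' : max c 1 < s := by exact_mod_cast hs1
    have hsc : c < s := lt_of_le_of_lt (le_max_left _ _) hs1'
    have hs1'' : 1 < s := lt_of_le_of_lt (le_max_right _ _) hs1'
    have hSs := Aux.Sset_of_lt (by linarith : (0:ℝ) ≤ s) hs2
    have h1 := Aux.L1 hm hs1'' hSs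
    have h3 := Aux.le_lambda h1
    have h4 : ((m:ℝ)*s + m - 1 : ℝ) ≤ ((n:ℝ)*α + n - 1 : ℝ) := by
      have := le_trans h3 hL
      exact_mod_cast this
    have hsc' : s ≤ c := by
      rw [hcdef, le_div_iff₀ hm0]
      nlinarith
    linarith
end

section
/- Let k be a positive integer, ζ a real number, and set C_0 = (1/2)·k^{−1}·(1+|ζ|)^{1−k}. Suppose x is a positive integer with max_{1≤j≤k} ‖ζ^j x‖ < C_0·x^{−1}, let y be the integer closest to ζx, and write y/x = y_0/x_0 with integers x_0 > 0, y_0 and gcd(x_0, y_0) = 1. Then x_0^k divides x. Moreover, if x = N·x_0^k for a positive integer N, then max_{1≤j≤k} ‖ζ^j x‖ = N·max_{1≤j≤k} ‖ζ^j x_0^k‖. -/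
lemma mem1 {k : ℕ} (hk : 0 < k) : 1 ∈ Finset.Icc 1 k := Finset.mem_Icc.mpr ⟨le_rfl, hk⟩

lemma maxDist_eq_sup' {k : ℕ} (hk : 0 < k) (ζ : ℝ) (x : ℕ) :
    maxDist k ζ x = (Finset.Icc 1 k).sup' ⟨1, mem1 hk⟩
      (fun j => distNearestInt (ζ ^ j * x)) := by
  have hne : (Finset.Icc 1 k).Nonempty := ⟨1, mem1 hk⟩
  set f : ℕ → ℝ := fun j => distNearestInt (ζ ^ j * x) with hf
  have hf0 : ∀ j, 0 ≤ f j := fun j => abs_nonneg _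
  have hM0 : 0 ≤ (Finset.Icc 1 k).sup' hne f :=
    le_trans (hf0 1) (Finset.le_sup' f (mem1 hk))
  have hkey : ∀ j, (⨆ _ : j ∈ Finset.Icc 1 k, f j) ≤ (Finset.Icc 1 k).sup' hne f := by
    intro j
    by_cases hj : j ∈ Finset.Icc 1 k
    · rw [ciSup_pos hj]; exact Finset.le_sup' f hj
    · have : IsEmpty (j ∈ Finset.Icc 1 k) := ⟨hj⟩
      rw [Real.iSup_of_isEmpty]
      exact hM0
  have hbdd : BddAbove (Set.range fun j => ⨆ _ : j ∈ Finset.Icc 1 k, f j) := by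
    refine ⟨(Finset.Icc 1 k).sup' hne f, ?_⟩
    rintro z ⟨j, rfl⟩
    exact hkey j
  apply le_antisymm
  · exact ciSup_le hkey
  · refine Finset.sup'_le _ _ fun j hj => ?_
    have hle := le_ciSup hbdd j
    rwa [ciSup_pos hj] at hle

theorem stmt9 (k : ℕ) (hk : 0 < k) (ζ : ℝ) (C₀ : ℝ)
    (hC₀ : C₀ = 1 / 2 * (k : ℝ)⁻¹ * (1 + |ζ|) ^ (1 - (k : ℤ)))
    (x : ℕ) (hx : 0 < x) (h : maxDist k ζ x < C₀ * (x : ℝ)⁻¹)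
    (y : ℤ) (hy : y = round (ζ * x))
    (x₀ : ℕ) (y₀ : ℤ) (hx₀ : 0 < x₀) (hcop : Int.gcd (x₀ : ℤ) y₀ = 1)
    (hfrac : y * (x₀ : ℤ) = y₀ * (x : ℤ)) :
    x₀ ^ k ∣ x ∧
    (∀ N : ℕ, 0 < N → x = N * x₀ ^ k →
      maxDist k ζ x = N * maxDist k ζ (x₀ ^ k)) := by
  have hxR : (0:ℝ) < x := by exact_mod_cast hx
  have hx1 : (1:ℝ) ≤ x := by exact_mod_cast hx
  have hx₀R : (0:ℝ) < x₀ := by exact_mod_cast hx₀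
  have hk1 : (1:ℝ) ≤ k := by exact_mod_cast hk
  set M : ℝ := 1 + |ζ| with hM
  have hM1 : (1:ℝ) ≤ M := le_add_of_nonneg_right (abs_nonneg ζ)
  have hM0 : (0:ℝ) < M := lt_of_lt_of_le one_pos hM1
  set B : ℝ := M ^ (k - 1) with hBdef
  have hB1 : (1:ℝ) ≤ B := one_le_pow₀ hM1
  have hC : C₀ = 1/2 * (k:ℝ)⁻¹ * B⁻¹ := by
    rw [hC₀, show (1 - (k:ℤ)) = -((k-1 : ℕ):ℤ) by push_cast [Nat.cast_sub hk]; ring,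
      zpow_neg, zpow_natCast]
  have hC₀pos : 0 < C₀ := by
    rw [hC]; positivity
  have hCkB : C₀ * ((k:ℝ) * B) = 1/2 := by
    rw [hC]; field_simp
  have hkB1 : (1:ℝ) ≤ (k:ℝ) * B := by nlinarith
  have hC₀half : C₀ ≤ 1/2 := by nlinarith
  -- pointwise bound
  have hmx := maxDist_eq_sup' hk ζ x
  have hD : ∀ j ∈ Finset.Icc 1 k, distNearestInt (ζ ^ j * x) < C₀ * (x:ℝ)⁻¹ := by
    intro j hj
    calc distNearestInt (ζ ^ j * x) ≤ maxDist k ζ x := by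
          rw [hmx]; exact Finset.le_sup' (fun j => distNearestInt (ζ ^ j * (x:ℝ))) hj
    _ < _ := h
  have hy1 : distNearestInt (ζ ^ 1 * x) = |ζ * x - y| := by
    rw [distNearestInt, pow_one, hy]
  have hεx : |ζ * x - (y:ℝ)| < C₀ * (x:ℝ)⁻¹ := by
    rw [← hy1]; exact hD 1 (mem1 hk)
  set q : ℝ := (y:ℝ)/x with hq
  have hq_mul : (ζ - q) * x = ζ * x - y := by rw [hq]; field_simp
  have hqabs : |ζ - q| * x = |ζ * x - (y:ℝ)| := by
    rw [← hq_mul, abs_mul, abs_of_pos hxR]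
  have hxinv1 : (x:ℝ)⁻¹ ≤ 1 := inv_le_one_of_one_le₀ hx1
  have hεsmall : |ζ - q| ≤ 1 := by
    have h1 : |ζ - q| ≤ |ζ - q| * x := le_mul_of_one_le_right (abs_nonneg _) hx1
    have h2 : C₀ * (x:ℝ)⁻¹ ≤ C₀ := mul_le_of_le_one_right hC₀pos.le hxinv1
    linarith
  have hqM : |q| ≤ M := by
    have := abs_sub_abs_le_abs_sub q ζ
    rw [abs_sub_comm q ζ] at this
    rw [hM]; linarith
  have hζM : |ζ| ≤ M := by rw [hM]; linarith [abs_nonneg ζ]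
  -- key estimate
  have key : ∀ j ∈ Finset.Icc 1 k, |ζ ^ j * x - x * q ^ j| < 1 / (2 * x) := by
    intro j hj
    obtain ⟨hj1, hjk⟩ := Finset.mem_Icc.mp hj
    have hgeom := geom_sum₂_mul ζ q j
    have hsum : |∑ i ∈ Finset.range j, ζ ^ i * q ^ (j - 1 - i)| ≤ (j:ℝ) * M ^ (j-1) := by
      calc |∑ i ∈ Finset.range j, ζ ^ i * q ^ (j - 1 - i)|
          ≤ ∑ i ∈ Finset.range j, |ζ ^ i * q ^ (j - 1 - i)| :=
            Finset.abs_sum_le_sum_abs _ _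
      _ ≤ ∑ _i ∈ Finset.range j, M ^ (j-1) := by
            refine Finset.sum_le_sum fun i hi => ?_
            rw [abs_mul, abs_pow, abs_pow]
            have hi' : i < j := Finset.mem_range.mp hi
            calc |ζ| ^ i * |q| ^ (j-1-i) ≤ M ^ i * M ^ (j-1-i) := by
                  apply mul_le_mul (pow_le_pow_left₀ (abs_nonneg _) hζM i)
                    (pow_le_pow_left₀ (abs_nonneg _) hqM _) (by positivity) (by positivity)
            _ = M ^ (j-1) := by rw [← pow_add]; congr 1; omega
      _ = (j:ℝ) * M ^ (j-1) := by
            rw [Finset.sum_const, Finset.card_range, nsmul_eq_mul]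
    have hid : ζ ^ j * (x:ℝ) - (x:ℝ) * q ^ j =
        (∑ i ∈ Finset.range j, ζ ^ i * q ^ (j - 1 - i)) * ((ζ - q) * (x:ℝ)) := by
      rw [← mul_assoc, hgeom]; ring
    have hestL : |ζ ^ j * (x:ℝ) - (x:ℝ) * q ^ j| =
        |∑ i ∈ Finset.range j, ζ ^ i * q ^ (j - 1 - i)| * (|ζ - q| * x) := by
      rw [hid, abs_mul, abs_mul, abs_of_pos hxR]
    have hjM : (j:ℝ) * M ^ (j-1) ≤ (k:ℝ) * B := by
      apply mul_le_mul (by exact_mod_cast hjk)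
        (pow_le_pow_right₀ hM1 (by omega)) (by positivity) (by positivity)
    have hjMpos : (0:ℝ) < (k:ℝ) * B := by positivity
    calc |ζ ^ j * x - x * q ^ j|
        = |∑ i ∈ Finset.range j, ζ ^ i * q ^ (j - 1 - i)| * (|ζ - q| * x) := hestL
      _ ≤ ((k:ℝ) * B) * (|ζ - q| * x) := by
          apply mul_le_mul_of_nonneg_right (hsum.trans hjM) (by positivity)
      _ < ((k:ℝ) * B) * (C₀ * (x:ℝ)⁻¹) := by
          apply mul_lt_mul_of_pos_left _ hjMpos
          rw [hqabs]; exact hεx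
      _ = 1 / (2 * x) := by
          rw [show ((k:ℝ)*B)*(C₀*(x:ℝ)⁻¹) = C₀*((k:ℝ)*B)*(x:ℝ)⁻¹ by ring, hCkB]
          field_simp
  have key2 : ∀ j ∈ Finset.Icc 1 k, |(x:ℝ) * q ^ j - (round (ζ ^ j * (x:ℝ)) : ℝ)| < 1/x := by
    intro j hj
    have h1 := key j hj
    have h2 : distNearestInt (ζ^j * x) < 1/(2*x) := by
      refine lt_of_lt_of_le (hD j hj) ?_
      calc C₀ * (x:ℝ)⁻¹ ≤ 1/2 * (x:ℝ)⁻¹ :=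
            mul_le_mul_of_nonneg_right hC₀half (by positivity)
      _ = 1/(2*x) := by field_simp
    rw [distNearestInt] at h2
    calc |(x:ℝ) * q ^ j - (round (ζ ^ j * (x:ℝ)) : ℝ)|
        ≤ |(x:ℝ) * q ^ j - ζ^j * x| + |ζ^j * x - (round (ζ ^ j * (x:ℝ)) : ℝ)| :=
          abs_sub_le _ _ _
      _ < 1/(2*x) + 1/(2*x) := by
          rw [abs_sub_comm]
          exact add_lt_add h1 h2
      _ = 1/x := by ring_nf
  have hqq : q = (y₀:ℝ)/x₀ := by
    rw [hq, div_eq_div_iff hxR.ne' hx₀R.ne']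
    exact_mod_cast hfrac
  have hco : IsCoprime (x₀:ℤ) y₀ := Int.isCoprime_iff_gcd_eq_one.mpr hcop
  have hdvd0 : (x₀:ℤ) ∣ (x:ℤ) := by
    have hd : (x₀:ℤ) ∣ y₀ * x := ⟨y, by linarith⟩
    exact hco.dvd_of_dvd_mul_left hd
  have hx₀le : x₀ ≤ x := Nat.le_of_dvd hx (by exact_mod_cast hdvd0)
  have hdvd : ∀ j, j ≤ k → x₀ ^ j ∣ x := by
    intro j
    induction j with
    | zero => intro _; simpa using Dvd.intro x rfl
    | succ n ih =>
      intro hnk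
      obtain ⟨s, hs⟩ := ih (Nat.le_of_succ_le hnk)
      set m : ℤ := round (ζ ^ (n+1) * (x:ℝ)) with hm
      have hmem : (n+1) ∈ Finset.Icc 1 k := Finset.mem_Icc.mpr ⟨Nat.succ_le_succ (Nat.zero_le n), hnk⟩
      have hkey := key2 (n+1) hmem
      have hxs : (x:ℝ) = (x₀:ℝ)^n * s := by exact_mod_cast hs
      have hreal : (x:ℝ) * q ^ (n+1) = (s:ℝ) * (y₀:ℝ)^(n+1) / x₀ := by
        rw [hqq, hxs, div_pow]
        rw [show (x₀:ℝ)^(n+1) = x₀^n * x₀ by ring]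
        field_simp
      rw [hreal] at hkey
      have h1 : |(s:ℝ) * (y₀:ℝ)^(n+1) - m * x₀| < (x₀:ℝ) / x := by
        have heq : |(s:ℝ) * (y₀:ℝ)^(n+1) - m * x₀| =
            (x₀:ℝ) * |(s:ℝ) * (y₀:ℝ)^(n+1) / x₀ - (m:ℝ)| := by
          rw [← abs_of_pos hx₀R, ← abs_mul]
          congr 1
          field_simp
          rw [abs_of_pos hx₀R]; ring
        rw [heq, div_eq_mul_one_div ((x₀:ℝ)) ((x:ℝ))]
        exact mul_lt_mul_of_pos_left hkey hx₀R
      have h2 : (x₀:ℝ)/x ≤ 1 := by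
        rw [div_le_one hxR]; exact_mod_cast hx₀le
      have hz : |((s:ℤ) * y₀^(n+1) - m * x₀ : ℤ)| < 1 := by
        have hcast : |(((s:ℤ) * y₀^(n+1) - m * x₀ : ℤ) : ℝ)| < 1 := by
          push_cast
          linarith
        exact_mod_cast hcast
      have hz0 : (s:ℤ) * y₀^(n+1) = m * x₀ := by
        have := Int.abs_lt_one_iff.mp hz
        omega
      have hzdvd : (x₀:ℤ) ∣ (s:ℤ) * y₀^(n+1) := ⟨m, by linarith⟩
      have hds : (x₀:ℤ) ∣ (s:ℤ) := (hco.pow_right).dvd_of_dvd_mul_right hzdvd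
      obtain ⟨t, ht⟩ := Int.natCast_dvd_natCast.mp hds
      exact ⟨t, by rw [hs, ht]; ring⟩
  refine ⟨hdvd k le_rfl, ?_⟩
  intro N hN hxN
  have hNR : (0:ℝ) < N := by exact_mod_cast hN
  have hN1 : (1:ℝ) ≤ N := by exact_mod_cast hN
  have hhalf : 1/(2*(x:ℝ)) ≤ 1/2 := by
    have := one_div_le_one_div_of_le (by norm_num : (0:ℝ) < 2) (by linarith : (2:ℝ) ≤ 2*x)
    linarith
  have hpt : ∀ j ∈ Finset.Icc 1 k,
      distNearestInt (ζ ^ j * (x:ℝ)) = N * distNearestInt (ζ ^ j * ((x₀ ^ k : ℕ):ℝ)) := by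
    intro j hj
    obtain ⟨hj1, hjk⟩ := Finset.mem_Icc.mp hj
    set J : ℤ := y₀ ^ j * (x₀:ℤ) ^ (k - j) with hJ
    have hxr : (x:ℝ) = (N:ℝ) * (x₀:ℝ)^k := by exact_mod_cast hxN
    have hpows : (x₀:ℝ)^(k-j) * (x₀:ℝ)^j = (x₀:ℝ)^k := by
      rw [← pow_add, Nat.sub_add_cancel hjk]
    have hJr : (J:ℝ) = (x₀:ℝ)^k * q ^ j := by
      rw [hqq, hJ]
      push_cast
      rw [div_pow]
      field_simp
      linear_combination (y₀:ℝ)^j * hpows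
    have hIr : ((N * J : ℤ):ℝ) = (x:ℝ) * q ^ j := by
      push_cast
      push_cast at hJr
      rw [hxr]
      linear_combination (N:ℝ) * hJr
    have h1 : |ζ ^ j * (x:ℝ) - ((N*J : ℤ):ℝ)| < 1/(2*x) := by
      rw [hIr]; exact key j hj
    have hr1 : round (ζ ^ j * (x:ℝ)) = N * J := by
      have hd := abs_sub_round (ζ ^ j * (x:ℝ))
      have habs : |((round (ζ^j * (x:ℝ)) - N*J : ℤ) : ℝ)| < 1 := by
        push_cast
        have := abs_sub_le ((round (ζ^j * (x:ℝ)) : ℝ)) (ζ^j * (x:ℝ)) (((N:ℤ)*J : ℤ):ℝ)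
        rw [abs_sub_comm _ (ζ^j * (x:ℝ))] at this
        push_cast at this h1
        linarith
      have := Int.abs_lt_one_iff.mp (by exact_mod_cast habs)
      omega
    have hcast : ((x₀^k : ℕ):ℝ) = (x₀:ℝ)^k := by push_cast; ring
    have hsc : ζ^j * ((x₀^k:ℕ):ℝ) - (J:ℝ) = (ζ^j * (x:ℝ) - ((N*J:ℤ):ℝ)) / N := by
      rw [hcast, hxr]
      push_cast
      field_simp
    have h2 : |ζ ^ j * ((x₀^k:ℕ):ℝ) - (J:ℝ)| < 1/(2*x) := by
      rw [hsc, abs_div, abs_of_pos hNR]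
      exact lt_of_le_of_lt (div_le_self (abs_nonneg _) hN1) h1
    have hr2 : round (ζ ^ j * ((x₀^k:ℕ):ℝ)) = J := by
      have hd := abs_sub_round (ζ ^ j * ((x₀^k:ℕ):ℝ))
      have habs : |((round (ζ^j * ((x₀^k:ℕ):ℝ)) - J : ℤ) : ℝ)| < 1 := by
        push_cast
        have := abs_sub_le ((round (ζ^j * ((x₀^k:ℕ):ℝ)) : ℝ)) (ζ^j * ((x₀^k:ℕ):ℝ)) ((J:ℤ):ℝ)
        rw [abs_sub_comm _ (ζ^j * ((x₀^k:ℕ):ℝ))] at this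
        push_cast at this h2 hd
        linarith [hhalf]
      have := Int.abs_lt_one_iff.mp (by exact_mod_cast habs)
      omega
    rw [distNearestInt, distNearestInt, hr1, hr2, ← abs_of_pos hNR, ← abs_mul]
    congr 1
    rw [hcast, hxr]
    push_cast
    ring
  have hne : (Finset.Icc 1 k).Nonempty := ⟨1, mem1 hk⟩
  rw [maxDist_eq_sup' hk ζ x, maxDist_eq_sup' hk ζ (x₀^k)]
  rw [Finset.sup'_congr hne rfl hpt]
  exact (Finset.comp_sup'_eq_sup'_comp hne (fun a => (N:ℝ) * a)
    (fun a b => mul_max_of_nonneg a b hNR.le)).symm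
end
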